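/- arXiv:2307.04302 — 6 statements merged into one kernel-verified Lean document; each statement's English description precedes it below -/
import Mathlib

section
/- For the greedy algorithm with item supply clipping parameter 1/2 (each agent buys min{R_j, B_i/w_{ij}} of the highest-weight item j whose remaining fraction R_j exceeds 1/2, in decreasing weight order), and for any agent subset S ⊆ [n], the payment of each agent i ∈ S when the algorithm is run only on S is at least half her payment when the algorithm is run on all agents: p_i^S ≥ (1/2)·p_i. -/
open Classical in
/-- One step of the greedy algorithm for unit-demand agents with supply clipping 1/2:
when pair `(i,j)` is processed (and `i` belongs to the active set `S`), if agent `i`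
has bought nothing yet and the remaining fraction of item `j` exceeds `1/2`, she buys
`min (remaining) (B i / w i j)` of item `j`. -/
noncomputable def gstep (n m : ℕ) (w : Fin n → Fin m → ℝ) (B : Fin n → ℝ)
    (S : Finset (Fin n)) (x : Fin n → Fin m → ℝ) (pr : Fin n × Fin m) :
    Fin n → Fin m → ℝ :=
  if pr.1 ∈ S ∧ (∀ j', x pr.1 j' = 0) ∧ 1 / 2 < 1 - ∑ i', x i' pr.2 then
    fun i j =>
      if i = pr.1 ∧ j = pr.2 then
        min (1 - ∑ i', x i' pr.2) (B pr.1 / w pr.1 pr.2)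
      else x i j
  else x

/-- The greedy algorithm run on the active agent set `S`, processing the agent-item
pairs in the order given by the list `L` (decreasing weights), starting from the empty
allocation. -/
noncomputable def grun (n m : ℕ) (w : Fin n → Fin m → ℝ) (B : Fin n → ℝ)
    (S : Finset (Fin n)) (L : List (Fin n × Fin m)) : Fin n → Fin m → ℝ :=
  L.foldl (gstep n m w B S) (fun _ _ => 0)

section Aux

variable {n m : ℕ} {w : Fin n → Fin m → ℝ} {B : Fin n → ℝ} {S : Finset (Fin n)}

/-- gstep either leaves an entry unchanged, or (when it fires at this entry) sets it. -/
lemma gstep_cases (x : Fin n → Fin m → ℝ) (pr : Fin n × Fin m) (i : Fin n) (j : Fin m) :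
    gstep n m w B S x pr i j = x i j ∨
    (pr.1 ∈ S ∧ (∀ j', x pr.1 j' = 0) ∧ 1 / 2 < 1 - ∑ i', x i' pr.2 ∧ i = pr.1 ∧ j = pr.2 ∧
      gstep n m w B S x pr i j = min (1 - ∑ i', x i' pr.2) (B pr.1 / w pr.1 pr.2)) := by
  unfold gstep
  split
  · rename_i hc
    by_cases hij : i = pr.1 ∧ j = pr.2
    · exact Or.inr ⟨hc.1, hc.2.1, hc.2.2, hij.1, hij.2, by simp [hij]⟩
    · exact Or.inl (by simp [hij])
  · exact Or.inl rfl

lemma gstep_pos (x : Fin n → Fin m → ℝ) (pr : Fin n × Fin m)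
    (h : pr.1 ∈ S ∧ (∀ j', x pr.1 j' = 0) ∧ 1 / 2 < 1 - ∑ i', x i' pr.2) :
    gstep n m w B S x pr = fun i j =>
      if i = pr.1 ∧ j = pr.2 then
        min (1 - ∑ i', x i' pr.2) (B pr.1 / w pr.1 pr.2)
      else x i j := by
  unfold gstep; exact if_pos h

lemma gstep_neg (x : Fin n → Fin m → ℝ) (pr : Fin n × Fin m)
    (h : ¬(pr.1 ∈ S ∧ (∀ j', x pr.1 j' = 0) ∧ 1 / 2 < 1 - ∑ i', x i' pr.2)) :
    gstep n m w B S x pr = x := by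
  unfold gstep; exact if_neg h

lemma gstep_eq_of_ne (x : Fin n → Fin m → ℝ) (pr : Fin n × Fin m) {i : Fin n} {j : Fin m}
    (h : ¬(i = pr.1 ∧ j = pr.2)) : gstep n m w B S x pr i j = x i j := by
  rcases gstep_cases (w := w) (B := B) x pr i j with he | ⟨_, _, _, h1, h2, _⟩
  · exact he
  · exact absurd ⟨h1, h2⟩ h

lemma gstep_persist (x : Fin n → Fin m → ℝ) (pr : Fin n × Fin m) {i : Fin n} {j : Fin m}
    (h : x i j ≠ 0) : gstep n m w B S x pr i j = x i j := by
  rcases gstep_cases (w := w) (B := B) x pr i j with he | ⟨_, hz, _, h1, _, _⟩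
  · exact he
  · exact absurd (h1 ▸ hz j) h

end Aux

section Aux2

variable {n m : ℕ} {w : Fin n → Fin m → ℝ} {B : Fin n → ℝ} {S : Finset (Fin n)}

lemma foldl_pres {P : (Fin n → Fin m → ℝ) → Prop}
    (hP : ∀ x pr, P x → P (gstep n m w B S x pr)) :
    ∀ (l : List (Fin n × Fin m)) (x), P x → P (l.foldl (gstep n m w B S) x) := by
  intro l
  induction l with
  | nil => exact fun x h => h
  | cons pr l ih => exact fun x h => ih _ (hP x pr h)

lemma run_nonneg (hw : ∀ i j, 0 < w i j) (hB : ∀ i, 0 < B i)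
    (l : List (Fin n × Fin m)) : ∀ i j, 0 ≤ grun n m w B S l i j := by
  refine foldl_pres (P := fun x => ∀ i j, 0 ≤ x i j) ?_ l _ (fun i j => le_refl 0)
  intro x pr h i j
  rcases gstep_cases (w := w) (B := B) x pr i j with he | ⟨_, _, hr, _, _, hv⟩
  · rw [he]; exact h i j
  · rw [hv]
    exact le_min (by linarith) (le_of_lt (div_pos (hB _) (hw _ _)))

lemma run_lb (hw : ∀ i j, 0 < w i j) (hB : ∀ i, 0 < B i)
    (l : List (Fin n × Fin m)) :
    ∀ i j, grun n m w B S l i j = 0 ∨ min (1/2) (B i / w i j) ≤ grun n m w B S l i j := by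
  refine foldl_pres (P := fun x => ∀ i j, x i j = 0 ∨ min (1/2) (B i / w i j) ≤ x i j)
    ?_ l _ (fun i j => Or.inl rfl)
  intro x pr h i j
  rcases gstep_cases (w := w) (B := B) x pr i j with he | ⟨_, _, hr, hi, hj, hv⟩
  · rw [he]; exact h i j
  · rw [hv, hi, hj]
    exact Or.inr (min_le_min (by linarith) le_rfl)

lemma run_ub (hw : ∀ i j, 0 < w i j) (hB : ∀ i, 0 < B i)
    (l : List (Fin n × Fin m)) :
    ∀ i j, grun n m w B S l i j = 0 ∨
      (grun n m w B S l i j ≤ B i / w i j ∧ grun n m w B S l i j ≤ 1) := by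
  suffices H : (∀ i j, 0 ≤ grun n m w B S l i j) ∧
      (∀ i j, grun n m w B S l i j = 0 ∨
        (grun n m w B S l i j ≤ B i / w i j ∧ grun n m w B S l i j ≤ 1)) by exact H.2
  refine foldl_pres (S := S) (P := fun x => (∀ i j, 0 ≤ x i j) ∧
      (∀ i j, x i j = 0 ∨ (x i j ≤ B i / w i j ∧ x i j ≤ 1)))
    ?_ l (fun _ _ => 0) ⟨fun i j => le_refl 0, fun i j => Or.inl rfl⟩
  intro x pr h
  refine ⟨?_, ?_⟩
  · intro i j
    rcases gstep_cases (w := w) (B := B) x pr i j with he | ⟨_, _, hr, _, _, hv⟩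
    · rw [he]; exact h.1 i j
    · rw [hv]; exact le_min (by linarith) (le_of_lt (div_pos (hB _) (hw _ _)))
  · intro i j
    rcases gstep_cases (w := w) (B := B) x pr i j with he | ⟨_, _, hr, hi, hj, hv⟩
    · rw [he]; exact h.2 i j
    · rw [hv, hi, hj]
      refine Or.inr ⟨min_le_right _ _, le_trans (min_le_left _ _) ?_⟩
      have : 0 ≤ ∑ i', x i' pr.2 := Finset.sum_nonneg (fun i' _ => h.1 i' pr.2)
      linarith

lemma run_one (l : List (Fin n × Fin m)) :
    ∀ k j j', grun n m w B S l k j ≠ 0 → grun n m w B S l k j' ≠ 0 → j = j' := by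
  refine foldl_pres (P := fun x => ∀ k j j', x k j ≠ 0 → x k j' ≠ 0 → j = j')
    ?_ l _ (fun k j j' h _ => absurd rfl h)
  intro x pr h k j j' h1 h2
  rcases gstep_cases (w := w) (B := B) x pr k j with he | ⟨_, hz, _, hi, hj, _⟩ <;>
    rcases gstep_cases (w := w) (B := B) x pr k j' with he' | ⟨_, hz', _, hi', hj', _⟩
  · exact h k j j' (he ▸ h1) (he' ▸ h2)
  · exact absurd (he ▸ h1) (by rw [hi'] at *; exact not_not_intro (hz' j))
  · exact absurd (he' ▸ h2) (by rw [hi] at *; exact not_not_intro (hz j'))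
  · rw [hj, hj']

lemma foldl_persist : ∀ (l : List (Fin n × Fin m)) (x) {i j}, x i j ≠ 0 →
    l.foldl (gstep n m w B S) x i j = x i j := by
  intro l
  induction l with
  | nil => intro x i j _; rfl
  | cons pr l ih =>
    intro x i j h
    have hp := gstep_persist (w := w) (B := B) (S := S) x pr h
    simp only [List.foldl_cons]
    rw [ih _ (by rw [hp]; exact h), hp]

lemma foldl_mem : ∀ (l : List (Fin n × Fin m)) (x) {i j},
    l.foldl (gstep n m w B S) x i j ≠ 0 → x i j ≠ 0 ∨ (i, j) ∈ l := by
  intro l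
  induction l with
  | nil => intro x i j h; exact Or.inl h
  | cons pr l ih =>
    intro x i j h
    rcases ih _ h with h' | h'
    · rcases gstep_cases (w := w) (B := B) x pr i j with he | ⟨_, _, _, hi, hj, _⟩
      · exact Or.inl (he ▸ h')
      · exact Or.inr (by simp [hi, hj, Prod.ext_iff])
    · exact Or.inr (List.mem_cons_of_mem _ h')

lemma buy_prefix : ∀ (l : List (Fin n × Fin m)) {i j},
    l.foldl (gstep n m w B S) (fun _ _ => 0) i j ≠ 0 →
    ∃ s t, l = s ++ (i, j) :: t ∧
      (s ++ [(i, j)]).foldl (gstep n m w B S) (fun _ _ => 0) i j ≠ 0 := by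
  intro l
  induction l using List.reverseRecOn with
  | nil => intro i j h; simp at h
  | append_singleton l' pr ih =>
    intro i j h
    rw [List.foldl_append] at h
    by_cases h0 : l'.foldl (gstep n m w B S) (fun _ _ => 0) i j = 0
    · have h1 : gstep n m w B S (l'.foldl (gstep n m w B S) (fun _ _ => 0)) pr i j ≠ 0 := by
        simpa using h
      rcases gstep_cases (w := w) (B := B)
          (l'.foldl (gstep n m w B S) (fun _ _ => 0)) pr i j with he | ⟨_, _, _, hi, hj, _⟩
      · rw [he] at h1; exact absurd h1 (not_not_intro h0)
      · refine ⟨l', [], by simp [hi, hj, Prod.ext_iff], ?_⟩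
        rw [List.foldl_append]
        have : pr = (i, j) := by simp [hi, hj, Prod.ext_iff]
        simpa [this] using h1
    · obtain ⟨s, t, hst, hne⟩ := ih h0
      exact ⟨s, t ++ [pr], by rw [hst]; simp, hne⟩

end Aux2

section Aux3

variable {n m : ℕ} {w : Fin n → Fin m → ℝ} {B : Fin n → ℝ} {S : Finset (Fin n)}

lemma bought_persist (x : Fin n → Fin m → ℝ) (pr : Fin n × Fin m) (k : Fin n)
    (h : ¬∀ j', x k j' = 0) : ¬∀ j', gstep n m w B S x pr k j' = 0 := by
  push_neg at h ⊢
  obtain ⟨j0, hj0⟩ := h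
  exact ⟨j0, by rw [gstep_persist x pr hj0]; exact hj0⟩

lemma sum_ite_col (x : Fin n → Fin m → ℝ) (k : Fin n) (j : Fin m) (v : ℝ) (hz : x k j = 0) :
    ∑ i', (if i' = k then v else x i' j) = v + ∑ i', x i' j := by
  have h : ∀ i' : Fin n, (if i' = k then v else x i' j) =
      (if i' = k then v - x i' j else 0) + x i' j := by
    intro i'; by_cases h : i' = k
    · subst h; simp [hz]
    · simp [h]
  simp only [h]
  rw [Finset.sum_add_distrib, Finset.sum_ite_eq' Finset.univ k (fun i' => v - x i' j)]
  simp [hz]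

lemma gstep_sold_fire (x : Fin n → Fin m → ℝ) (pr : Fin n × Fin m)
    (h : pr.1 ∈ S ∧ (∀ j', x pr.1 j' = 0) ∧ 1 / 2 < 1 - ∑ i', x i' pr.2) :
    ∑ i', gstep n m w B S x pr i' pr.2 =
      min (1 - ∑ i', x i' pr.2) (B pr.1 / w pr.1 pr.2) + ∑ i', x i' pr.2 := by
  rw [gstep_pos x pr h]
  simp only [and_true]
  exact sum_ite_col x pr.1 pr.2 _ (h.2.1 pr.2)

lemma gstep_sold_other (x : Fin n → Fin m → ℝ) (pr : Fin n × Fin m) (j : Fin m)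
    (hj : j ≠ pr.2) : ∑ i', gstep n m w B S x pr i' j = ∑ i', x i' j :=
  Finset.sum_congr rfl fun i' _ => gstep_eq_of_ne x pr (fun h => hj h.2)

lemma min_sub_mono {a b c : ℝ} (hab : a ≤ b) : a - min a c ≤ b - min b c := by
  rcases le_total a c with h | h
  · rw [min_eq_left h]; have := min_le_left b c; linarith
  · rw [min_eq_right h, min_eq_right (h.trans hab)]; linarith

def Pinv (S : Finset (Fin n)) (xu xs : Fin n → Fin m → ℝ) : Prop :=
  (∀ k ∈ S, (¬∀ j', xu k j' = 0) → (¬∀ j', xs k j' = 0)) ∧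
  (∀ j, 1 - ∑ i', xu i' j ≤ 1 / 2 ∨ 1 - ∑ i', xu i' j ≤ 1 - ∑ i', xs i' j)

lemma step_P (hw : ∀ i j, 0 < w i j) (hB : ∀ i, 0 < B i)
    (xu xs : Fin n → Fin m → ℝ) (pr : Fin n × Fin m) (H : Pinv S xu xs) :
    Pinv S (gstep n m w B Finset.univ xu pr) (gstep n m w B S xs pr) := by
  obtain ⟨H1, H2⟩ := H
  have cpos : 0 < B pr.1 / w pr.1 pr.2 := div_pos (hB _) (hw _ _)
  by_cases hu : pr.1 ∈ (Finset.univ : Finset (Fin n)) ∧ (∀ j', xu pr.1 j' = 0) ∧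
      1 / 2 < 1 - ∑ i', xu i' pr.2
  · by_cases hs : pr.1 ∈ S ∧ (∀ j', xs pr.1 j' = 0) ∧ 1 / 2 < 1 - ∑ i', xs i' pr.2
    · -- both fire
      constructor
      · intro k hk hb
        by_cases hkk : k = pr.1
        · intro hall
          have h2 := hall pr.2
          rw [gstep_pos xs pr hs] at h2
          simp only [hkk, and_self, if_pos] at h2
          have hv : (0:ℝ) < min (1 - ∑ i', xs i' pr.2) (B pr.1 / w pr.1 pr.2) :=
            lt_min (by linarith [hs.2.2]) cpos
          exact absurd h2 (ne_of_gt hv)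
        · have hb' : ¬∀ j', xu k j' = 0 := by
            intro hall; apply hb; intro j'
            rw [gstep_eq_of_ne xu pr (fun h => hkk h.1)]; exact hall j'
          exact bought_persist xs pr k (H1 k hk hb')
      · intro j
        by_cases hj : j = pr.2
        · subst hj
          rw [gstep_sold_fire xu pr hu, gstep_sold_fire xs pr hs]
          have hab : 1 - ∑ i', xu i' pr.2 ≤ 1 - ∑ i', xs i' pr.2 := by
            rcases H2 pr.2 with h | h
            · linarith [hu.2.2]
            · exact h
          right
          have key := min_sub_mono (c := B pr.1 / w pr.1 pr.2) hab
          linarith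
        · rw [gstep_sold_other xu pr j hj, gstep_sold_other xs pr j hj]
          exact H2 j
    · -- univ fires only
      have hxs : gstep n m w B S xs pr = xs := gstep_neg xs pr hs
      constructor
      · intro k hk hb
        rw [hxs]
        by_cases hkk : k = pr.1
        · subst hkk
          intro hall
          have h3 : ¬(1 / 2 < 1 - ∑ i', xs i' pr.2) := fun hlt => hs ⟨hk, hall, hlt⟩
          push_neg at h3
          rcases H2 pr.2 with h | h
          · linarith [hu.2.2]
          · linarith [hu.2.2]
        · have hb' : ¬∀ j', xu k j' = 0 := by
            intro hall; apply hb; intro j'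
            rw [gstep_eq_of_ne xu pr (fun h => hkk h.1)]; exact hall j'
          exact H1 k hk hb'
      · intro j
        rw [hxs]
        by_cases hj : j = pr.2
        · subst hj
          rw [gstep_sold_fire xu pr hu]
          rcases H2 pr.2 with h | h
          · exact absurd h (not_le.mpr hu.2.2)
          · right
            have hv : (0:ℝ) < min (1 - ∑ i', xu i' pr.2) (B pr.1 / w pr.1 pr.2) :=
              lt_min (by linarith [hu.2.2]) cpos
            linarith
        · rw [gstep_sold_other xu pr j hj]
          exact H2 j
  · by_cases hs : pr.1 ∈ S ∧ (∀ j', xs pr.1 j' = 0) ∧ 1 / 2 < 1 - ∑ i', xs i' pr.2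
    · -- S fires only
      have hxu : gstep n m w B Finset.univ xu pr = xu := gstep_neg xu pr hu
      have hRu : 1 - ∑ i', xu i' pr.2 ≤ 1 / 2 := by
        by_cases hz : ∀ j', xu pr.1 j' = 0
        · by_contra hlt; push_neg at hlt; exact hu ⟨Finset.mem_univ _, hz, hlt⟩
        · exact absurd hs.2.1 (H1 pr.1 hs.1 hz)
      constructor
      · intro k hk hb
        rw [hxu] at hb
        exact bought_persist xs pr k (H1 k hk hb)
      · intro j
        rw [hxu]
        by_cases hj : j = pr.2
        · subst hj; exact Or.inl hRu
        · rw [gstep_sold_other xs pr j hj]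
          exact H2 j
    · -- neither fires
      rw [gstep_neg xu pr hu, gstep_neg xs pr hs]
      exact ⟨H1, H2⟩

lemma run_P (hw : ∀ i j, 0 < w i j) (hB : ∀ i, 0 < B i) (l : List (Fin n × Fin m)) :
    Pinv S (grun n m w B Finset.univ l) (grun n m w B S l) := by
  have main : ∀ (l : List (Fin n × Fin m)) (xu xs), Pinv S xu xs →
      Pinv S (l.foldl (gstep n m w B Finset.univ) xu) (l.foldl (gstep n m w B S) xs) := by
    intro l
    induction l with
    | nil => exact fun xu xs h => h
    | cons pr l ih => exact fun xu xs h => ih _ _ (step_P hw hB xu xs pr h)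
  refine main l _ _ ⟨?_, ?_⟩
  · intro k hk hb; exact absurd (fun j' => rfl) hb
  · intro j; right; simp

end Aux3

/-- Agent payment monotonicity of the greedy algorithm with supply clipping 1/2:
running the algorithm only on a subset `S` of the agents, every agent `i ∈ S` pays at
least half of what she pays in the run on all agents. -/
theorem stmt_3 (n m : ℕ) (w : Fin n → Fin m → ℝ) (B : Fin n → ℝ)
    (hw : ∀ i j, 0 < w i j) (hB : ∀ i, 0 < B i)
    (L : List (Fin n × Fin m)) (hL1 : ∀ pr : Fin n × Fin m, pr ∈ L) (hL2 : L.Nodup)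
    (hL3 : L.Pairwise (fun p q => w q.1 q.2 ≤ w p.1 p.2))
    (S : Finset (Fin n)) :
    ∀ i ∈ S,
      (∑ j, w i j * (grun n m w B Finset.univ L) i j) / 2
        ≤ ∑ j, w i j * (grun n m w B S L) i j := by
  intro i hi
  have hNNs : ∀ i' j, 0 ≤ grun n m w B S L i' j := run_nonneg hw hB L
  have rhs_nonneg : ∀ j ∈ (Finset.univ : Finset (Fin m)),
      0 ≤ w i j * grun n m w B S L i j :=
    fun j _ => mul_nonneg (le_of_lt (hw i j)) (hNNs i j)
  by_cases hbuy : ∀ j, grun n m w B Finset.univ L i j = 0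
  · have h0 : ∑ j, w i j * grun n m w B Finset.univ L i j = 0 :=
      Finset.sum_eq_zero (fun j _ => by rw [hbuy j, mul_zero])
    rw [h0]
    simpa using Finset.sum_nonneg rhs_nonneg
  · push_neg at hbuy
    obtain ⟨j0, hj0⟩ := hbuy
    -- the full-run payment is a single term
    have hone := run_one (w := w) (B := B) (S := Finset.univ) L
    have hlhs : ∑ j, w i j * grun n m w B Finset.univ L i j =
        w i j0 * grun n m w B Finset.univ L i j0 := by
      refine Finset.sum_eq_single j0 ?_ (by simp)
      intro j _ hne
      by_cases h : grun n m w B Finset.univ L i j = 0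
      · rw [h, mul_zero]
      · exact absurd (hone i j j0 h hj0) hne
    -- bounds on the full-run payment
    rcases run_ub (S := Finset.univ) hw hB L i j0 with h | ⟨hub1, hub2⟩
    · exact absurd h hj0
    have hpB : grun n m w B Finset.univ L i j0 * w i j0 ≤ B i :=
      (le_div_iff₀ (hw i j0)).mp hub1
    have hpw : w i j0 * grun n m w B Finset.univ L i j0 ≤ w i j0 :=
      mul_le_of_le_one_right (le_of_lt (hw i j0)) hub2
    -- find the prefix of L where i makes her purchase in the full run
    obtain ⟨s, t, hL, hpre⟩ := buy_prefix (S := (Finset.univ : Finset (Fin n))) L hj0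
    -- the invariant at that prefix: i has also bought in the S-run
    have hP := run_P (S := S) hw hB (s ++ [(i, j0)])
    have hbu : ¬∀ j', grun n m w B Finset.univ (s ++ [(i, j0)]) i j' = 0 :=
      fun hall => hpre (hall j0)
    have hbs := hP.1 i hi hbu
    push_neg at hbs
    obtain ⟨j1, hj1⟩ := hbs
    -- (i, j1) appears in the prefix, hence has weight at least w i j0
    have hmem : (i, j1) ∈ s ++ [(i, j0)] := by
      rcases foldl_mem (s ++ [(i, j0)]) (fun _ _ => 0) hj1 with h | h
      · exact absurd rfl h
      · exact h
    have hw01 : w i j0 ≤ w i j1 := by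
      rcases List.mem_append.mp hmem with h | h
      · have hp : List.Pairwise (fun p q : Fin n × Fin m => w q.1 q.2 ≤ w p.1 p.2)
            (s ++ (i, j0) :: t) := hL ▸ hL3
        have := (List.pairwise_append.mp hp).2.2 (i, j1) h (i, j0) List.mem_cons_self
        simpa using this
      · simp only [List.mem_singleton, Prod.mk.injEq] at h
        rw [h.2]
    -- the S-run purchase persists to the end of the run
    have hsplit : L = (s ++ [(i, j0)]) ++ t := by rw [hL]; simp
    have hXSj1 : grun n m w B S L i j1 ≠ 0 := by
      show L.foldl (gstep n m w B S) (fun _ _ => 0) i j1 ≠ 0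
      rw [hsplit, List.foldl_append]
      show t.foldl (gstep n m w B S) (grun n m w B S (s ++ [(i, j0)])) i j1 ≠ 0
      rw [foldl_persist t _ hj1]
      exact hj1
    rcases run_lb (S := S) hw hB L i j1 with h | hlb
    · exact absurd h hXSj1
    have hrhs : w i j1 * grun n m w B S L i j1 ≤ ∑ j, w i j * grun n m w B S L i j :=
      Finset.single_le_sum rhs_nonneg (Finset.mem_univ j1)
    rw [hlhs]
    rcases le_total (1 / 2 : ℝ) (B i / w i j1) with hc | hc
    · have h1 : (1 / 2 : ℝ) ≤ grun n m w B S L i j1 := by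
        rw [min_eq_left hc] at hlb; exact hlb
      have h2 : w i j1 * (1 / 2) ≤ w i j1 * grun n m w B S L i j1 :=
        mul_le_mul_of_nonneg_left h1 (le_of_lt (hw i j1))
      linarith
    · have h1 : B i / w i j1 ≤ grun n m w B S L i j1 := by
        rw [min_eq_right hc] at hlb; exact hlb
      have h2 : B i ≤ grun n m w B S L i j1 * w i j1 :=
        (div_le_iff₀ (hw i j1)).mp h1
      have := hB i
      linarith
end

section
/- In the greedy algorithm with supply clipping 1/2 run on all agents and on a subset S: for any agent i ∈ S, letting k and k' be the items agent i buys in the full run and the S-run respectively, for every item j it holds that max{R_j(i,k), 1/2} ≤ max{R_j^S(i,k'), 1/2}, where R_j(i,k) and R_j^S(i,k') denote the remaining fractions of item j at the end of those respective iterations. -/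
section Aux

variable {n m : ℕ} {w : Fin n → Fin m → ℝ} {B : Fin n → ℝ} {S : Finset (Fin n)}

lemma gstep_app_pos {x : Fin n → Fin m → ℝ} {pr : Fin n × Fin m}
    (h : pr.1 ∈ S ∧ (∀ j', x pr.1 j' = 0) ∧ 1 / 2 < 1 - ∑ i', x i' pr.2)
    (i : Fin n) (j : Fin m) :
    gstep n m w B S x pr i j =
      if i = pr.1 ∧ j = pr.2 then min (1 - ∑ i', x i' pr.2) (B pr.1 / w pr.1 pr.2)
      else x i j := by
  unfold gstep
  rw [if_pos h]

lemma gstep_app_neg {x : Fin n → Fin m → ℝ} {pr : Fin n × Fin m}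
    (h : ¬ (pr.1 ∈ S ∧ (∀ j', x pr.1 j' = 0) ∧ 1 / 2 < 1 - ∑ i', x i' pr.2)) :
    gstep n m w B S x pr = x := by
  unfold gstep
  rw [if_neg h]

lemma sum_gstep_pos {x : Fin n → Fin m → ℝ} {pr : Fin n × Fin m}
    (h : pr.1 ∈ S ∧ (∀ j', x pr.1 j' = 0) ∧ 1 / 2 < 1 - ∑ i', x i' pr.2)
    (j : Fin m) :
    ∑ i', gstep n m w B S x pr i' j =
      (∑ i', x i' j) +
        (if j = pr.2 then min (1 - ∑ i', x i' pr.2) (B pr.1 / w pr.1 pr.2) else 0) := by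
  rw [Finset.sum_congr rfl (fun i' _ => gstep_app_pos h i' j)]
  by_cases hj : j = pr.2
  · subst hj
    rw [if_pos rfl]
    have : ∀ i' ∈ Finset.univ, (if i' = pr.1 ∧ pr.2 = pr.2 then
          min (1 - ∑ i', x i' pr.2) (B pr.1 / w pr.1 pr.2)
        else x i' pr.2) = x i' pr.2 +
          (if i' = pr.1 then min (1 - ∑ i', x i' pr.2) (B pr.1 / w pr.1 pr.2) else 0) := by
      intro i' _
      by_cases hi' : i' = pr.1
      · subst hi'
        rw [if_pos ⟨rfl, rfl⟩, if_pos rfl, h.2.1 pr.2]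
        ring
      · rw [if_neg (fun hc => hi' hc.1), if_neg hi']
        ring
    rw [Finset.sum_congr rfl this, Finset.sum_add_distrib,
      Finset.sum_ite_eq' Finset.univ pr.1
        (fun _ => min (1 - ∑ i', x i' pr.2) (B pr.1 / w pr.1 pr.2))]
    simp
  · rw [if_neg hj]
    rw [Finset.sum_congr rfl (fun i' _ => by rw [if_neg (fun hc : i' = pr.1 ∧ j = pr.2 => hj hc.2)])]
    ring

lemma gstep_mono (hw : ∀ i j, 0 < w i j) (hB : ∀ i, 0 < B i)
    (x : Fin n → Fin m → ℝ) (pr : Fin n × Fin m) (a : Fin n) (b : Fin m) :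
    x a b ≤ gstep n m w B S x pr a b := by
  by_cases h : pr.1 ∈ S ∧ (∀ j', x pr.1 j' = 0) ∧ 1 / 2 < 1 - ∑ i', x i' pr.2
  · rw [gstep_app_pos h]
    by_cases hab : a = pr.1 ∧ b = pr.2
    · rw [if_pos hab, hab.1, h.2.1 b]
      exact le_min (by linarith [h.2.2]) (le_of_lt (div_pos (hB _) (hw _ _)))
    · rw [if_neg hab]
  · rw [gstep_app_neg h]

lemma foldl_mono (hw : ∀ i j, 0 < w i j) (hB : ∀ i, 0 < B i) :
    ∀ (P : List (Fin n × Fin m)) (x : Fin n → Fin m → ℝ) (a : Fin n) (b : Fin m),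
      x a b ≤ P.foldl (gstep n m w B S) x a b := by
  intro P
  induction P with
  | nil => intro x a b; exact le_refl _
  | cons pr P ih =>
    intro x a b
    exact le_trans (gstep_mono hw hB x pr a b) (ih _ a b)

lemma grun_nonneg (hw : ∀ i j, 0 < w i j) (hB : ∀ i, 0 < B i)
    (P : List (Fin n × Fin m)) (a : Fin n) (b : Fin m) :
    0 ≤ grun n m w B S P a b :=
  foldl_mono hw hB P (fun _ _ => 0) a b

lemma foldl_notmem :
    ∀ (P : List (Fin n × Fin m)) (x : Fin n → Fin m → ℝ) (a : Fin n) (b : Fin m),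
      (a, b) ∉ P → P.foldl (gstep n m w B S) x a b = x a b := by
  intro P
  induction P with
  | nil => intro x a b _; rfl
  | cons pr P ih =>
    intro x a b hab
    have h1 : (a, b) ≠ pr := fun h => hab (h ▸ List.mem_cons_self)
    have h2 : (a, b) ∉ P := fun h => hab (List.mem_cons_of_mem _ h)
    rw [List.foldl_cons, ih _ a b h2]
    by_cases h : pr.1 ∈ S ∧ (∀ j', x pr.1 j' = 0) ∧ 1 / 2 < 1 - ∑ i', x i' pr.2
    · rw [gstep_app_pos h, if_neg (fun hc => h1 (Prod.ext hc.1 hc.2))]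
    · rw [gstep_app_neg h]

lemma grun_append (P Q : List (Fin n × Fin m)) :
    grun n m w B S (P ++ Q) = Q.foldl (gstep n m w B S) (grun n m w B S P) := by
  unfold grun
  rw [List.foldl_append]

lemma grun_single (P : List (Fin n × Fin m)) (pr : Fin n × Fin m) :
    grun n m w B S (P ++ [pr]) = gstep n m w B S (grun n m w B S P) pr := by
  rw [grun_append]; rfl

lemma trigger_of_pos {P Q : List (Fin n × Fin m)} {a : Fin n} {b : Fin m}
    (hnd : (P ++ (a, b) :: Q).Nodup)
    (hpos : grun n m w B S (P ++ (a, b) :: Q) a b ≠ 0) :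
    a ∈ S ∧ (∀ j', grun n m w B S P a j' = 0) ∧
      1 / 2 < 1 - ∑ i', grun n m w B S P i' b := by
  have hnotP : (a, b) ∉ P := by
    intro hmem
    exact (List.disjoint_of_nodup_append hnd) hmem List.mem_cons_self
  have hnotQ : (a, b) ∉ Q := by
    have := (List.nodup_append'.mp hnd).2.1
    exact (List.nodup_cons.mp this).1
  have hrun : grun n m w B S (P ++ (a, b) :: Q)
      = Q.foldl (gstep n m w B S) (gstep n m w B S (grun n m w B S P) (a, b)) := by
    rw [grun_append, List.foldl_cons]
  have h1 : grun n m w B S (P ++ (a, b) :: Q) a b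
      = gstep n m w B S (grun n m w B S P) (a, b) a b := by
    rw [hrun, foldl_notmem Q _ a b hnotQ]
  have h0 : grun n m w B S P a b = 0 := foldl_notmem P _ a b hnotP
  by_contra hcon
  apply hpos
  rw [h1, gstep_app_neg hcon, h0]

def GInv (S : Finset (Fin n)) (x y : Fin n → Fin m → ℝ) : Prop :=
  (∀ j : Fin m, max (1 - ∑ i', x i' j) (1 / 2) ≤ max (1 - ∑ i', y i' j) (1 / 2)) ∧
  (∀ a ∈ S, (∃ j, x a j ≠ 0) → ∃ j, y a j ≠ 0)

lemma GInv_step (hw : ∀ i j, 0 < w i j) (hB : ∀ i, 0 < B i)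
    (x y : Fin n → Fin m → ℝ) (pr : Fin n × Fin m) (h : GInv S x y) :
    GInv S (gstep n m w B Finset.univ x pr) (gstep n m w B S y pr) := by
  set Rx := 1 - ∑ i', x i' pr.2 with hRx
  set Ry := 1 - ∑ i', y i' pr.2 with hRy
  set c := B pr.1 / w pr.1 pr.2 with hc
  have hc0 : 0 < c := div_pos (hB _) (hw _ _)
  by_cases hT1 : pr.1 ∈ Finset.univ ∧ (∀ j', x pr.1 j' = 0) ∧ 1 / 2 < Rx
  · by_cases hT2 : pr.1 ∈ S ∧ (∀ j', y pr.1 j' = 0) ∧ 1 / 2 < Ry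
    · -- both runs buy
      have hxy : Rx ≤ Ry := by
        have := h.1 pr.2
        rw [max_eq_left hT1.2.2.le, max_eq_left hT2.2.2.le] at this
        exact this
      constructor
      · intro j
        rw [sum_gstep_pos hT1 j, sum_gstep_pos hT2 j]
        by_cases hj : j = pr.2
        · rw [if_pos hj, if_pos hj]
          have hsub : Rx - min Rx c ≤ Ry - min Ry c := by
            rcases le_total Rx c with h1 | h1 <;> rcases le_total Ry c with h2 | h2 <;>
              simp only [min_eq_left, min_eq_right, h1, h2] <;> linarith
          have e1 : 1 - ((∑ i', x i' j) + min Rx c) = Rx - min Rx c := by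
            rw [hRx]; subst hj; ring
          have e2 : 1 - ((∑ i', y i' j) + min Ry c) = Ry - min Ry c := by
            rw [hRy]; subst hj; ring
          rw [e1, e2]
          exact max_le_max hsub le_rfl
        · rw [if_neg hj, if_neg hj, add_zero, add_zero]
          exact h.1 j
      · intro a ha hbuy
        by_cases haa : a = pr.1
        · refine ⟨pr.2, ?_⟩
          rw [gstep_app_pos hT2, if_pos ⟨haa, rfl⟩]
          exact ne_of_gt (lt_min (by linarith [hT2.2.2]) hc0)
        · obtain ⟨j, hj⟩ := h.2 a ha (by
            obtain ⟨j, hj⟩ := hbuy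
            exact ⟨j, by rwa [gstep_app_pos hT1, if_neg (fun hcon => haa hcon.1)] at hj⟩)
          exact ⟨j, by rw [gstep_app_pos hT2, if_neg (fun hcon => haa hcon.1)]; exact hj⟩
    · -- only the full run buys
      rw [gstep_app_neg hT2]
      constructor
      · intro j
        rw [sum_gstep_pos hT1 j]
        by_cases hj : j = pr.2
        · rw [if_pos hj]
          have hmin : 0 ≤ min Rx c := le_min (by linarith [hT1.2.2]) hc0.le
          refine le_trans ?_ (h.1 j)
          apply max_le_max _ le_rfl
          linarith
        · rw [if_neg hj, add_zero]
          exact h.1 j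
      · intro a ha hbuy
        by_cases haa : a = pr.1
        · subst haa
          -- a = pr.1 just bought in full run; show it has bought in S-run
          by_contra hnone
          push_neg at hnone
          have hy0 : ∀ j', y pr.1 j' = 0 := hnone
          have : ¬ (1 / 2 < Ry) := fun hlt => hT2 ⟨ha, hy0, hlt⟩
          have hRyle : Ry ≤ 1 / 2 := not_lt.mp this
          have := h.1 pr.2
          rw [max_eq_left hT1.2.2.le, max_eq_right hRyle] at this
          linarith [hT1.2.2]
        · -- a ≠ pr.1 : its x-row unchanged
          apply h.2 a ha
          obtain ⟨j, hj⟩ := hbuy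
          refine ⟨j, ?_⟩
          rwa [gstep_app_pos hT1, if_neg (fun hcon => haa hcon.1)] at hj
  · rw [gstep_app_neg hT1]
    by_cases hT2 : pr.1 ∈ S ∧ (∀ j', y pr.1 j' = 0) ∧ 1 / 2 < Ry
    · -- only the S-run buys
      constructor
      · intro j
        rw [sum_gstep_pos hT2 j]
        by_cases hj : j = pr.2
        · rw [if_pos hj]
          subst hj
          -- show Rx ≤ 1/2 here
          have hx2 : ¬ (1 / 2 < Rx) := by
            intro hlt
            apply hT1
            refine ⟨Finset.mem_univ _, ?_, hlt⟩
            intro j'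
            by_contra h0
            have : ∃ j, x pr.1 j ≠ 0 := ⟨j', h0⟩
            obtain ⟨j0, hj0⟩ := h.2 pr.1 hT2.1 this
            exact hj0 (hT2.2.1 j0)
          rw [max_eq_right (not_lt.mp hx2)]
          exact le_max_right _ _
        · rw [if_neg hj, add_zero]
          exact h.1 j
      · intro a ha hbuy
        by_cases haa : a = pr.1
        · refine ⟨pr.2, ?_⟩
          rw [gstep_app_pos hT2, if_pos ⟨haa, rfl⟩]
          exact ne_of_gt (lt_min (by linarith [hT2.2.2]) hc0)
        · obtain ⟨j, hj⟩ := h.2 a ha hbuy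
          refine ⟨j, ?_⟩
          rw [gstep_app_pos hT2, if_neg (fun hcon => haa hcon.1)]
          exact hj
    · rw [gstep_app_neg hT2]
      exact h

lemma GInv_run (hw : ∀ i j, 0 < w i j) (hB : ∀ i, 0 < B i)
    (P : List (Fin n × Fin m)) :
    GInv S (grun n m w B Finset.univ P) (grun n m w B S P) := by
  have key : ∀ (P : List (Fin n × Fin m)) (x y : Fin n → Fin m → ℝ), GInv S x y →
      GInv S (P.foldl (gstep n m w B Finset.univ) x) (P.foldl (gstep n m w B S) y) := by
    intro P
    induction P with
    | nil => intro x y h; exact h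
    | cons pr P ih =>
      intro x y h
      exact ih _ _ (GInv_step hw hB x y pr h)
  refine key P _ _ ⟨fun j => le_rfl, fun a _ hbuy => ?_⟩
  obtain ⟨j, hj⟩ := hbuy
  exact absurd rfl hj

end Aux

/-- Key structural lemma for the greedy algorithm with supply clipping 1/2: if agent
`i ∈ S` buys item `k` in the full run and item `k'` in the run on `S` (positions given
by decompositions of the processing order `L`), then for every item `j`,
`max (R_j(i,k)) (1/2) ≤ max (R_j^S(i,k')) (1/2)`, where `R_j(i,k)` (resp.
`R_j^S(i,k')`) is the remaining fraction of item `j` at the end of iteration `(i,k)` of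
the full run (resp. iteration `(i,k')` of the `S`-run; iterations of agents outside `S`
are empty in the `S`-run). -/
theorem stmt_5 (n m : ℕ) (w : Fin n → Fin m → ℝ) (B : Fin n → ℝ)
    (hw : ∀ i j, 0 < w i j) (hB : ∀ i, 0 < B i)
    (L : List (Fin n × Fin m)) (hL1 : ∀ pr : Fin n × Fin m, pr ∈ L) (hL2 : L.Nodup)
    (hL3 : L.Pairwise (fun p q => w q.1 q.2 ≤ w p.1 p.2))
    (S : Finset (Fin n)) (i : Fin n) (hi : i ∈ S) (k k' : Fin m)
    (hk : 0 < (grun n m w B Finset.univ L) i k)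
    (hk' : 0 < (grun n m w B S L) i k')
    (L1 L2 M1 M2 : List (Fin n × Fin m))
    (hdec : L = L1 ++ (i, k) :: L2)
    (hdec' : L = M1 ++ (i, k') :: M2) :
    ∀ j, max (1 - ∑ i', (grun n m w B Finset.univ (L1 ++ [(i, k)])) i' j) (1 / 2)
      ≤ max (1 - ∑ i', (grun n m w B S (M1 ++ [(i, k')])) i' j) (1 / 2) := by

  have hk1 : grun n m w B Finset.univ (L1 ++ (i, k) :: L2) i k ≠ 0 := by
    rw [← hdec]; exact hk.ne'
  have hnd1 : (L1 ++ (i, k) :: L2).Nodup := by rw [← hdec]; exact hL2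
  have hT1 := trigger_of_pos hnd1 hk1
  have hk2 : grun n m w B S (M1 ++ (i, k') :: M2) i k' ≠ 0 := by
    rw [← hdec']; exact hk'.ne'
  have hnd2 : (M1 ++ (i, k') :: M2).Nodup := by rw [← hdec']; exact hL2
  have hT2 := trigger_of_pos hnd2 hk2
  set P := L1 ++ [(i, k)] with hP
  set Q := M1 ++ [(i, k')] with hQ
  have hPtake : L.take (L1.length + 1) = P := by
    have hL' : L = (L1 ++ [(i, k)]) ++ L2 := by rw [hdec]; simp
    rw [hL']
    exact List.take_left' (by simp)
  have hQtake : L.take (M1.length + 1) = Q := by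
    have hL' : L = (M1 ++ [(i, k')]) ++ M2 := by rw [hdec']; simp
    rw [hL']
    exact List.take_left' (by simp)
  have hM1take : L.take M1.length = M1 := by
    rw [hdec']
    exact List.take_left' rfl
  have hlen : M1.length ≤ L1.length := by
    by_contra hlt
    push_neg at hlt
    have hpre : P <+: M1 := by
      have h1 : M1.take (L1.length + 1) = P := by
        rw [← hM1take, List.take_take, min_eq_left (Nat.succ_le_of_lt hlt)]
        exact hPtake
      exact h1 ▸ List.take_prefix _ _
    obtain ⟨T, hT⟩ := hpre
    have hbuyP : grun n m w B Finset.univ P i k ≠ 0 := by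
      rw [grun_single, gstep_app_pos hT1, if_pos ⟨rfl, rfl⟩]
      exact ne_of_gt (lt_min (by linarith [hT1.2.2]) (div_pos (hB _) (hw _ _)))
    obtain ⟨j0, hj0⟩ := (GInv_run hw hB P).2 i hi ⟨k, hbuyP⟩
    have hmono : grun n m w B S P i j0 ≤ grun n m w B S M1 i j0 := by
      rw [← hT, grun_append P T]
      exact foldl_mono hw hB T _ i j0
    have hz : grun n m w B S M1 i j0 = 0 := hT2.2.1 j0
    have hge : 0 ≤ grun n m w B S P i j0 := grun_nonneg hw hB P i j0
    rw [hz] at hmono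
    exact hj0 (le_antisymm hmono hge)
  have hQP : Q <+: P := by
    have h1 : P.take (M1.length + 1) = Q := by
      rw [← hPtake, List.take_take, min_eq_left (by omega)]
      exact hQtake
    exact h1 ▸ List.take_prefix _ _
  obtain ⟨T, hT⟩ := hQP
  intro j
  refine le_trans ((GInv_run (S := S) hw hB P).1 j) ?_
  apply max_le_max _ le_rfl
  have hsum : ∑ i', grun n m w B S Q i' j ≤ ∑ i', grun n m w B S P i' j := by
    apply Finset.sum_le_sum
    intro i' _
    rw [← hT, grun_append Q T]
    exact foldl_mono hw hB T _ i' j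
  linarith
end

section
/- In the single divisible item setting, suppose a reserve-price procedure sets r = (1/4)·P_S where P_S = Σ_{i∈S} p*_i and sells fractions sequentially to agents in R = [n]\S, where each agent i with v_i/τ_i ≥ r buys min{B_i/r, α} of the remaining fraction α at price r per unit. If P_S ∈ [OPT/3, 2·OPT/3] and P_S ≤ OPT, then the total revenue collected is at least OPT/12. -/
open Classical in
/-- Sequential selling of a divisible item at per-unit reserve price `r`: agents arrive
in the order of the list; an arriving agent `i` with `v i / τ i ≥ r` buys
`min (B i / r) (remaining fraction)`. Returns the total revenue collected, given the
currently remaining fraction. -/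
noncomputable def sellRev (n : ℕ) (v B τ : Fin n → ℝ) (r : ℝ) :
    List (Fin n) → ℝ → ℝ
  | [], _ => 0
  | i :: rest, α =>
    let y := if r ≤ v i / τ i then min (B i / r) α else 0
    y * r + sellRev n v B τ r rest (α - y)

open Classical in
lemma sellRev_nonneg (n : ℕ) (v B τ : Fin n → ℝ) (r : ℝ) (hr : 0 ≤ r)
    (hB : ∀ i, 0 < B i) :
    ∀ (L : List (Fin n)) (α : ℝ), 0 ≤ α → 0 ≤ sellRev n v B τ r L α := by
  intro L
  induction L with
  | nil => intro α _; simp [sellRev]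
  | cons i rest ih =>
    intro α hα
    simp only [sellRev]
    set y := if r ≤ v i / τ i then min (B i / r) α else 0 with hy
    have hy0 : 0 ≤ y := by
      rw [hy]; split
      · exact le_min (div_nonneg (hB i).le hr) hα
      · exact le_rfl
    have hyα : y ≤ α := by
      rw [hy]; split
      · exact min_le_right _ _
      · exact hα
    have := ih (α - y) (by linarith)
    nlinarith

open Classical in
lemma sellRev_key (n : ℕ) (v B τ : Fin n → ℝ) (r : ℝ) (hr : 0 < r)
    (hB : ∀ i, 0 < B i) :
    ∀ (L : List (Fin n)) (α : ℝ), 0 ≤ α →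
      min (r * α) ((L.map fun i => if r ≤ v i / τ i then B i else 0).sum)
        ≤ sellRev n v B τ r L α := by
  intro L
  induction L with
  | nil =>
    intro α hα
    simp only [List.map_nil, List.sum_nil, sellRev]
    exact min_le_right _ _
  | cons i rest ih =>
    intro α hα
    simp only [List.map_cons, List.sum_cons, sellRev]
    have hsum0 : 0 ≤ (rest.map fun i => if r ≤ v i / τ i then B i else 0).sum := by
      apply List.sum_nonneg
      intro x hx
      simp only [List.mem_map] at hx
      obtain ⟨j, _, rfl⟩ := hx
      split <;> [exact (hB j).le; exact le_rfl]
    by_cases hq : r ≤ v i / τ i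
    · simp only [if_pos hq]
      set y := min (B i / r) α with hy
      have hy0 : 0 ≤ y := le_min (div_nonneg (hB i).le hr.le) hα
      have hyα : y ≤ α := min_le_right _ _
      have hrec := ih (α - y) (by linarith)
      set T := (rest.map fun i => if r ≤ v i / τ i then B i else 0).sum
      have h1 : min (r * (α - y)) T ≤ sellRev n v B τ r rest (α - y) := hrec
      -- goal: min (r*α) (B i + T) ≤ y * r + sellRev ...
      rcases le_or_gt (B i / r) α with hc | hc
      · have hyB : y = B i / r := min_eq_left hc
        have hyr : y * r = B i := by
          rw [hyB]; field_simp
        rcases min_cases (r * (α - y)) T with ⟨he, _⟩ | ⟨he, _⟩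
        · have : min (r * α) (B i + T) ≤ r * α := min_le_left _ _
          nlinarith
        · have : min (r * α) (B i + T) ≤ B i + T := min_le_right _ _
          nlinarith
      · have hyB : y = α := min_eq_right hc.le
        have : min (r * α) (B i + T) ≤ r * α := min_le_left _ _
        rcases min_cases (r * (α - y)) T with ⟨he, _⟩ | ⟨he, _⟩
        · nlinarith
        · nlinarith
    · simp only [if_neg hq]
      have := ih α hα
      simpa using this

/-- Random-sampling procedure for one divisible item: with reserve price
`r = P_S / 4` where `P_S = Σ_{i∈S} p*_i` is the optimal-solution revenue of the sampled
agents, if `P_S ∈ [OPT/3, 2·OPT/3]` (and `P_S ≤ OPT`), selling sequentially to the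
remaining agents `R` collects revenue at least `OPT/12`. -/
theorem stmt_8 (n : ℕ) (v B τ : Fin n → ℝ)
    (hv : ∀ i, 0 ≤ v i) (hB : ∀ i, 0 < B i) (hτ : ∀ i, 0 < τ i)
    (S : Finset (Fin n)) (R : List (Fin n))
    (hRnd : R.Nodup) (hR : ∀ i, i ∈ R ↔ i ∉ S)
    (xstar pstar : Fin n → ℝ)
    (hps : ∀ i, pstar i = xstar i * (v i / τ i))
    (hpB : ∀ i, pstar i ≤ B i)
    (hx0 : ∀ i, 0 ≤ xstar i) (hx1 : ∑ i, xstar i ≤ 1)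
    (hPS1 : (∑ i, pstar i) / 3 ≤ ∑ i ∈ S, pstar i)
    (hPS2 : ∑ i ∈ S, pstar i ≤ 2 * (∑ i, pstar i) / 3)
    (hPS3 : ∑ i ∈ S, pstar i ≤ ∑ i, pstar i) :
    (∑ i, pstar i) / 12 ≤ sellRev n v B τ ((∑ i ∈ S, pstar i) / 4) R 1 := by
  classical
  set OPT := ∑ i, pstar i with hOPT
  set PS := ∑ i ∈ S, pstar i with hPS
  set r := PS / 4 with hrdef
  have hp0 : ∀ i, 0 ≤ pstar i := by
    intro i
    rw [hps i]
    exact mul_nonneg (hx0 i) (div_nonneg (hv i) (hτ i).le)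
  have hOPT0 : 0 ≤ OPT := Finset.sum_nonneg fun i _ => hp0 i
  have hPSnn : 0 ≤ PS := Finset.sum_nonneg fun i _ => hp0 i
  rcases eq_or_lt_of_le (by rw [hrdef]; linarith : (0:ℝ) ≤ r) with hr0 | hr0
  · -- r = 0, hence OPT = 0
    have hPS0 : PS = 0 := by rw [hrdef] at hr0; linarith
    have hOPTz : OPT = 0 := by linarith
    rw [hOPTz]
    simpa using sellRev_nonneg n v B τ r hr0.le hB R 1 (by norm_num)
  · have key := sellRev_key n v B τ r hr0 hB R 1 (by norm_num)
    rw [mul_one] at key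
    refine le_trans ?_ key
    -- show OPT/12 ≤ min r listsum
    apply le_min
    · rw [hrdef]; linarith
    · -- list sum ≥ OPT/6
      have hls : (R.map fun i => if r ≤ v i / τ i then B i else 0).sum
          = ∑ i ∈ R.toFinset, (if r ≤ v i / τ i then B i else 0) := by
        exact (List.sum_toFinset _ hRnd).symm
      have hRS : R.toFinset = Sᶜ := by
        ext i
        simp [List.mem_toFinset, hR i]
      rw [hls, hRS]
      have h1 : ∑ i ∈ Sᶜ, pstar i = OPT - PS := by
        rw [hOPT, hPS, ← Finset.sum_compl_add_sum S pstar]; ring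
      -- split Sᶜ by qualification
      have h2 : ∀ i ∈ Sᶜ, pstar i ≤ (if r ≤ v i / τ i then B i else 0) + r * xstar i := by
        intro i _
        by_cases hq : r ≤ v i / τ i
        · rw [if_pos hq]
          have := hpB i
          have : 0 ≤ r * xstar i := mul_nonneg hr0.le (hx0 i)
          linarith [hpB i]
        · rw [if_neg hq]
          push_neg at hq
          rw [hps i]
          have := mul_le_mul_of_nonneg_left hq.le (hx0 i)
          linarith [this]
      have h3 : ∑ i ∈ Sᶜ, pstar i ≤
          (∑ i ∈ Sᶜ, (if r ≤ v i / τ i then B i else 0)) + ∑ i ∈ Sᶜ, r * xstar i := by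
        rw [← Finset.sum_add_distrib]
        exact Finset.sum_le_sum h2
      have h4 : ∑ i ∈ Sᶜ, r * xstar i ≤ r := by
        rw [← Finset.mul_sum]
        have hsub : ∑ i ∈ Sᶜ, xstar i ≤ ∑ i, xstar i := by
          apply Finset.sum_le_sum_of_subset_of_nonneg (Finset.subset_univ _)
          intro i _ _
          exact hx0 i
        calc r * ∑ i ∈ Sᶜ, xstar i ≤ r * 1 := by
              apply mul_le_mul_of_nonneg_left _ hr0.le
              exact le_trans hsub hx1
          _ = r := mul_one r
      have hPSle : PS ≤ 2 * OPT / 3 := by rw [hPS, hOPT]; exact hPS2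
      have hPSge : OPT / 3 ≤ PS := by rw [hPS, hOPT]; exact hPS1
      have hrle : r ≤ OPT / 6 := by rw [hrdef]; linarith
      linarith
end

section
/- Algorithm 6 (the single-item auction with public budgets) is feasible: for every agent i, the payment satisfies p_i ≤ B_i and τ_i·p_i ≤ x_i·v_i, and the total allocation satisfies Σ_i x_i ≤ 1. -/
lemma aux10_floor_le {b y : ℝ} (hb : 1 < b) (hy : 0 < y) :
    b ^ (⌊Real.logb b y⌋ : ℤ) ≤ y := by
  have hb0 : (0:ℝ) < b := by linarith
  calc b ^ (⌊Real.logb b y⌋ : ℤ) = b ^ ((⌊Real.logb b y⌋ : ℤ) : ℝ) := by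
        rw [Real.rpow_intCast]
    _ ≤ b ^ (Real.logb b y) :=
        Real.rpow_le_rpow_of_exponent_le hb.le (Int.floor_le _)
    _ = y := Real.rpow_logb hb0 (by linarith) hy

lemma aux10_ceil_le {b y : ℝ} (hb : 1 < b) (hy : 0 < y) {m : ℤ} (h : y ≤ b ^ m) :
    b ^ (⌈Real.logb b y⌉ : ℤ) ≤ b ^ m := by
  have h1 : Real.logb b y ≤ (m : ℝ) := by
    rw [Real.logb_le_iff_le_rpow hb hy, Real.rpow_intCast]; exact h
  exact zpow_le_zpow_right₀ hb.le (Int.ceil_le.mpr h1)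

lemma aux10_ceil_le_mul {b y : ℝ} (hb : 1 < b) (hy : 0 < y) :
    b ^ (⌈Real.logb b y⌉ : ℤ) ≤ b * y := by
  have hb0 : (0:ℝ) < b := by linarith
  calc b ^ (⌈Real.logb b y⌉ : ℤ) = b ^ ((⌈Real.logb b y⌉ : ℤ) : ℝ) := by
        rw [Real.rpow_intCast]
    _ ≤ b ^ (Real.logb b y + 1) :=
        Real.rpow_le_rpow_of_exponent_le hb.le (Int.ceil_lt_add_one _).le
    _ = b * y := by
        rw [Real.rpow_add hb0, Real.rpow_logb hb0 (by linarith) hy, Real.rpow_one]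
        ring

lemma aux10_lt_imp {b : ℝ} (hb : 1 < b) {m l : ℤ} (h : b ^ m < b ^ l) :
    b * b ^ m ≤ b ^ l := by
  have hml : m < l := (zpow_lt_zpow_iff_right₀ hb).mp h
  calc b * b ^ m = b ^ (m + 1) := by rw [zpow_add_one₀ (by linarith : b ≠ 0)]; ring
    _ ≤ b ^ l := zpow_le_zpow_right₀ hb.le (by omega)

open Classical in
/-- Feasibility of Algorithm 6 (single divisible item auction with public budgets):
with rounded values `w i = (1+ε)^⌊log_{1+ε}(v i/τ i)⌋`, agents reindexed so that `w` is
nonincreasing, `k` the maximum index with `B[k] = Σ_{i≤k} B i ≤ w k`, and the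
allocation/payments as specified by the algorithm (case split on `B[k] > w (k+1)`),
every agent satisfies her budget and RoS constraints, and at most one unit of the item
is allocated.  Agents are indexed `0, …, n-1`. -/
theorem stmt_10 (n : ℕ) (ε : ℝ) (hε : 0 < ε) (B v τ : ℕ → ℝ)
    (hB : ∀ i < n, 0 < B i) (hv : ∀ i < n, 0 < v i) (hτ : ∀ i < n, 0 < τ i)
    (w : ℕ → ℝ)
    (hw : ∀ i, w i = (1 + ε) ^ (⌊Real.logb (1 + ε) (v i / τ i)⌋ : ℤ))
    (hsort : ∀ i j, i ≤ j → j < n → w j ≤ w i)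
    (k : ℕ) (hkn : k < n)
    (Bk : ℝ) (hBk : Bk = ∑ i ∈ Finset.range (k + 1), B i)
    (hkvalid : Bk ≤ w k)
    (hkmax : ∀ k' < n, (∑ i ∈ Finset.range (k' + 1), B i) ≤ w k' → k' ≤ k)
    (wnext : ℝ) (hwnext : wnext = if k + 1 < n then w (k + 1) else 0)
    (x p : ℕ → ℝ)
    (hxp : if wnext < Bk then
        -- case `B[k] > w_{k+1}`: uniform price `C[k] = (1+ε)^⌈log_{1+ε} B[k]⌉`
        (∀ i < n,
          (i ≤ k → x i = B i / ((1 + ε) * Bk) ∧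
            p i = x i * ((1 + ε) ^ (⌈Real.logb (1 + ε) Bk⌉ : ℤ))) ∧
          (k < i → x i = 0 ∧ p i = 0))
      else
        -- case `B[k] ≤ w_{k+1}`
        (∀ i < n,
          (i ≤ k → x i = B i / ((1 + ε) * wnext) ∧
            p i = (if wnext < w i then x i * ((1 + ε) * wnext) else x i * wnext)) ∧
          (i = k + 1 → x i = 1 / (1 + ε) - Bk / ((1 + ε) * wnext) ∧
            p i = x i * wnext) ∧
          (k + 1 < i → x i = 0 ∧ p i = 0))) :
    (∀ i < n, p i ≤ B i ∧ τ i * p i ≤ x i * v i) ∧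
      (∑ i ∈ Finset.range n, x i) ≤ 1 := by
  have hb1 : (1:ℝ) < 1 + ε := by linarith
  have hb0 : (0:ℝ) < 1 + ε := by linarith
  have hwpos : ∀ i, 0 < w i := fun i => by rw [hw]; positivity
  have hwle : ∀ i < n, w i ≤ v i / τ i := by
    intro i hi
    rw [hw]
    exact aux10_floor_le hb1 (div_pos (hv i hi) (hτ i hi))
  have hBkpos : 0 < Bk := by
    rw [hBk]
    apply Finset.sum_pos
    · intro i hi
      have : i < k + 1 := Finset.mem_range.mp hi
      exact hB i (by omega)
    · exact ⟨0, Finset.mem_range.mpr (Nat.succ_pos k)⟩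
  by_cases hc : wnext < Bk
  · -- Case 1: uniform price
    rw [if_pos hc] at hxp
    set C : ℝ := (1 + ε) ^ (⌈Real.logb (1 + ε) Bk⌉ : ℤ) with hC
    have hCpos : 0 < C := by rw [hC]; positivity
    have hCle : C ≤ (1 + ε) * Bk := aux10_ceil_le_mul hb1 hBkpos
    have hCw : ∀ i < n, i ≤ k → C ≤ w i := by
      intro i hi hik
      have h1 : Bk ≤ w i := le_trans hkvalid (hsort i k hik hkn)
      rw [hC, hw]
      exact aux10_ceil_le hb1 hBkpos (by rw [← hw i]; exact h1)
    constructor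
    · intro i hi
      rcases le_or_gt i k with hik | hik
      · obtain ⟨hx, hp⟩ := (hxp i hi).1 hik
        have hBi := hB i hi
        have hx0 : 0 ≤ x i := by
          rw [hx]; exact div_nonneg hBi.le (by positivity)
        have hvt : C ≤ v i / τ i := le_trans (hCw i hi hik) (hwle i hi)
        have h1 : C * τ i ≤ v i := (le_div_iff₀ (hτ i hi)).mp hvt
        constructor
        · rw [hp, hx]
          calc B i / ((1 + ε) * Bk) * C ≤ B i / ((1 + ε) * Bk) * ((1 + ε) * Bk) :=
                mul_le_mul_of_nonneg_left hCle (div_nonneg hBi.le (by positivity))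
            _ = B i := by field_simp
        · calc τ i * p i = x i * (C * τ i) := by rw [hp]; ring
            _ ≤ x i * v i := mul_le_mul_of_nonneg_left h1 hx0
      · obtain ⟨hx, hp⟩ := (hxp i hi).2 hik
        refine ⟨by rw [hp]; exact (hB i hi).le, by rw [hp, hx]; simp⟩
    · have hsub : Finset.range (k + 1) ⊆ Finset.range n := Finset.range_subset_range.mpr (by omega)
      have hzero : ∀ i ∈ Finset.range n, i ∉ Finset.range (k + 1) → x i = 0 := by
        intro i hi hni
        have hik : k < i := by
          have := Finset.mem_range.mp hi
          simp only [Finset.mem_range] at hni; omega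
        exact ((hxp i (Finset.mem_range.mp hi)).2 hik).1
      rw [← Finset.sum_subset hsub hzero]
      have hsum : ∑ i ∈ Finset.range (k + 1), x i = Bk / ((1 + ε) * Bk) := by
        rw [Finset.sum_congr rfl (fun i hi => ((hxp i (by
          have := Finset.mem_range.mp hi; omega)).1 (by
          have := Finset.mem_range.mp hi; omega)).1), ← Finset.sum_div, ← hBk]
      rw [hsum]
      rw [div_le_one (by positivity)]
      nlinarith
  · -- Case 2
    rw [if_neg hc] at hxp
    push_neg at hc
    have hk1n : k + 1 < n := by
      by_contra h
      rw [hwnext, if_neg h] at hc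
      linarith
    have hwn : wnext = w (k + 1) := by rw [hwnext, if_pos hk1n]
    have hwnpos : 0 < wnext := by rw [hwn]; exact hwpos _
    have hmax : wnext < Bk + B (k + 1) := by
      by_contra h
      push_neg at h
      have h2 : ∑ i ∈ Finset.range (k + 1 + 1), B i ≤ w (k + 1) := by
        rw [Finset.sum_range_succ, ← hBk, ← hwn]; exact h
      have := hkmax (k + 1) hk1n h2
      omega
    constructor
    · intro i hi
      rcases le_or_gt i k with hik | hik
      · obtain ⟨hx, hp⟩ := (hxp i hi).1 hik
        have hBi := hB i hi
        have hx0 : 0 ≤ x i := by rw [hx]; exact div_nonneg hBi.le (by positivity)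
        have hwni : wnext ≤ w i := by rw [hwn]; exact hsort i (k + 1) (by omega) hk1n
        by_cases hlt : wnext < w i
        · rw [if_pos hlt] at hp
          have hwi : (1 + ε) * wnext ≤ w i := by
            rw [hwn] at hlt ⊢
            rw [hw (k+1)] at hlt ⊢
            rw [hw i] at hlt ⊢
            exact aux10_lt_imp hb1 hlt
          have hvt : (1 + ε) * wnext ≤ v i / τ i := le_trans hwi (hwle i hi)
          have h1 : (1 + ε) * wnext * τ i ≤ v i := (le_div_iff₀ (hτ i hi)).mp hvt
          constructor
          · rw [hp, hx]
            have : B i / ((1 + ε) * wnext) * ((1 + ε) * wnext) = B i := by field_simp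
            rw [this]
          · calc τ i * p i = x i * ((1 + ε) * wnext * τ i) := by rw [hp]; ring
              _ ≤ x i * v i := mul_le_mul_of_nonneg_left h1 hx0
        · rw [if_neg hlt] at hp
          have hvt : wnext ≤ v i / τ i := le_trans hwni (hwle i hi)
          have h1 : wnext * τ i ≤ v i := (le_div_iff₀ (hτ i hi)).mp hvt
          constructor
          · rw [hp, hx]
            have hBi := hB i hi
            rw [div_mul_eq_mul_div]
            rw [div_le_iff₀ (by positivity)]
            nlinarith [mul_pos hBi hwnpos]
          · calc τ i * p i = x i * (wnext * τ i) := by rw [hp]; ring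
              _ ≤ x i * v i := mul_le_mul_of_nonneg_left h1 hx0
      · rcases eq_or_lt_of_le (Nat.succ_le_of_lt hik) with hik1 | hik1
        · obtain ⟨hx, hp⟩ := ((hxp i hi).2.1 hik1.symm)
          have hxval : x i = (wnext - Bk) / ((1 + ε) * wnext) := by
            rw [hx]; field_simp
          have hx0 : 0 ≤ x i := by
            rw [hxval]
            apply div_nonneg (by linarith) (by positivity)
          have hpval : p i = (wnext - Bk) / (1 + ε) := by
            rw [hp, hxval]
            field_simp
          have hik' : i = k + 1 := hik1.symm
          constructor
          · rw [hpval, hik']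
            have h2 : (wnext - Bk) / (1 + ε) ≤ wnext - Bk :=
              div_le_self (by linarith) (by linarith)
            linarith
          · have hvt : wnext ≤ v i / τ i := by
              rw [hwn, hik']; exact hwle (k+1) hk1n
            have h1 : wnext * τ i ≤ v i := (le_div_iff₀ (hτ i hi)).mp hvt
            calc τ i * p i = x i * (wnext * τ i) := by rw [hp]; ring
              _ ≤ x i * v i := mul_le_mul_of_nonneg_left h1 hx0
        · obtain ⟨hx, hp⟩ := (hxp i hi).2.2 hik1
          refine ⟨by rw [hp]; exact (hB i hi).le, by rw [hp, hx]; simp⟩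
    · have hsub : Finset.range (k + 2) ⊆ Finset.range n := Finset.range_subset_range.mpr (by omega)
      have hzero : ∀ i ∈ Finset.range n, i ∉ Finset.range (k + 2) → x i = 0 := by
        intro i hi hni
        simp only [Finset.mem_range] at hi hni
        exact ((hxp i hi).2.2 (by omega)).1
      rw [← Finset.sum_subset hsub hzero]
      rw [Finset.sum_range_succ]
      have hsum : ∑ i ∈ Finset.range (k + 1), x i = Bk / ((1 + ε) * wnext) := by
        rw [Finset.sum_congr rfl (fun i hi => ((hxp i (by
          have := Finset.mem_range.mp hi; omega)).1 (by
          have := Finset.mem_range.mp hi; omega)).1), ← Finset.sum_div, ← hBk]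
      have hxk1 := ((hxp (k+1) hk1n).2.1 rfl).1
      rw [hsum, hxk1]
      have : Bk / ((1 + ε) * wnext) + (1 / (1 + ε) - Bk / ((1 + ε) * wnext)) = 1 / (1 + ε) := by
        ring
      rw [this, div_le_one hb0]
      linarith
end

section
/- Algorithm 6 (the single-item auction with public budgets) achieves revenue at least OPT/((1+ε)(2+ε)), where OPT is the optimal offline revenue. -/
open Classical in
/-- Approximation ratio of Algorithm 6 (single divisible item auction with public
budgets): with the notation of the feasibility lemma, the revenue of the algorithm is
at least `OPT / ((1+ε)(2+ε))`, where `OPT` is the optimal offline revenue, i.e. the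
supremum of `Σ p' i` over feasible solutions (`x' ≥ 0`, `Σ x' ≤ 1`, `p' i ≤ B i`,
`p' i * τ i ≤ x' i * v i`). -/
theorem stmt_11 (n : ℕ) (ε : ℝ) (hε : 0 < ε) (B v τ : ℕ → ℝ)
    (hB : ∀ i < n, 0 < B i) (hv : ∀ i < n, 0 < v i) (hτ : ∀ i < n, 0 < τ i)
    (w : ℕ → ℝ)
    (hw : ∀ i, w i = (1 + ε) ^ (⌊Real.logb (1 + ε) (v i / τ i)⌋ : ℤ))
    (hsort : ∀ i j, i ≤ j → j < n → w j ≤ w i)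
    (k : ℕ) (hkn : k < n)
    (Bk : ℝ) (hBk : Bk = ∑ i ∈ Finset.range (k + 1), B i)
    (hkvalid : Bk ≤ w k)
    (hkmax : ∀ k' < n, (∑ i ∈ Finset.range (k' + 1), B i) ≤ w k' → k' ≤ k)
    (wnext : ℝ) (hwnext : wnext = if k + 1 < n then w (k + 1) else 0)
    (x p : ℕ → ℝ)
    (hxp : if wnext < Bk then
        (∀ i < n,
          (i ≤ k → x i = B i / ((1 + ε) * Bk) ∧
            p i = x i * ((1 + ε) ^ (⌈Real.logb (1 + ε) Bk⌉ : ℤ))) ∧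
          (k < i → x i = 0 ∧ p i = 0))
      else
        (∀ i < n,
          (i ≤ k → x i = B i / ((1 + ε) * wnext) ∧
            p i = (if wnext < w i then x i * ((1 + ε) * wnext) else x i * wnext)) ∧
          (i = k + 1 → x i = 1 / (1 + ε) - Bk / ((1 + ε) * wnext) ∧
            p i = x i * wnext) ∧
          (k + 1 < i → x i = 0 ∧ p i = 0))) :
    sSup {t : ℝ | ∃ x' p' : ℕ → ℝ,
        (∀ i < n, 0 ≤ x' i ∧ p' i ≤ B i ∧ p' i * τ i ≤ x' i * v i) ∧
        (∑ i ∈ Finset.range n, x' i) ≤ 1 ∧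
        t = ∑ i ∈ Finset.range n, p' i}
      / ((1 + ε) * (2 + ε))
    ≤ ∑ i ∈ Finset.range n, p i := by
  have hb1 : (1:ℝ) < 1 + ε := by linarith
  have hb0 : (0:ℝ) < 1 + ε := by linarith
  have hkn' : k + 1 ≤ n := hkn
  set ALG := ∑ i ∈ Finset.range n, p i with hALG
  have hBkpos : 0 < Bk := by
    rw [hBk]
    apply Finset.sum_pos
    · intro i hi
      exact hB i (by have := Finset.mem_range.mp hi; omega)
    · exact ⟨0, Finset.mem_range.mpr (Nat.succ_pos k)⟩
  have hwpos : ∀ i, 0 < w i := by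
    intro i; rw [hw]; positivity
  have hwnext0 : 0 ≤ wnext := by
    rw [hwnext]; split
    · exact (hwpos _).le
    · exact le_rfl
  have hwle : ∀ i, k + 1 ≤ i → i < n → w i ≤ wnext := by
    intro i h1 h2
    have hk1 : k + 1 < n := lt_of_le_of_lt h1 h2
    rw [hwnext, if_pos hk1]
    exact hsort (k+1) i h1 h2
  -- ratio bound
  have hratio : ∀ i < n, v i / τ i ≤ (1 + ε) * w i := by
    intro i hi
    have hr : 0 < v i / τ i := div_pos (hv i hi) (hτ i hi)
    set L := Real.logb (1 + ε) (v i / τ i) with hL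
    have h1 : v i / τ i = (1 + ε) ^ L := (Real.rpow_logb hb0 (ne_of_gt hb1) hr).symm
    have h2 : (1 + ε : ℝ) ^ L ≤ (1 + ε) ^ ((⌊L⌋ : ℝ) + 1) :=
      Real.rpow_le_rpow_of_exponent_le hb1.le (by linarith [Int.lt_floor_add_one L])
    have h3 : (1 + ε : ℝ) ^ ((⌊L⌋ : ℝ) + 1) = (1 + ε) * w i := by
      rw [hw, ← hL]
      rw [show ((⌊L⌋ : ℝ) + 1) = ((⌊L⌋ + 1 : ℤ) : ℝ) by push_cast; ring]
      rw [Real.rpow_intCast, zpow_add₀ (ne_of_gt hb0), zpow_one]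
      ring
    rw [h1]; rw [h3] at h2; exact h2
  -- OPT bound: every feasible value is at most Bk + (1+ε) * wnext
  have hA : ∀ t ∈ {t : ℝ | ∃ x' p' : ℕ → ℝ,
        (∀ i < n, 0 ≤ x' i ∧ p' i ≤ B i ∧ p' i * τ i ≤ x' i * v i) ∧
        (∑ i ∈ Finset.range n, x' i) ≤ 1 ∧
        t = ∑ i ∈ Finset.range n, p' i}, t ≤ Bk + (1 + ε) * wnext := by
    rintro t ⟨x', p', hfeas, hsum, rfl⟩
    rw [Finset.range_eq_Ico, ← Finset.sum_Ico_consecutive _ (Nat.zero_le (k+1)) hkn']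
    have hpart1 : ∑ i ∈ Finset.Ico 0 (k+1), p' i ≤ Bk := by
      rw [hBk, ← Finset.range_eq_Ico]
      apply Finset.sum_le_sum
      intro i hi
      exact (hfeas i (by have := Finset.mem_range.mp hi; omega)).2.1
    have hpart2 : ∑ i ∈ Finset.Ico (k+1) n, p' i ≤ (1 + ε) * wnext := by
      have step : ∀ i ∈ Finset.Ico (k+1) n, p' i ≤ x' i * ((1 + ε) * wnext) := by
        intro i hi
        obtain ⟨h1, h2⟩ := Finset.mem_Ico.mp hi
        obtain ⟨hx0, hpB, hpv⟩ := hfeas i h2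
        have hτi := hτ i h2
        have hpdiv : p' i ≤ x' i * (v i / τ i) := by
          rw [← mul_div_assoc]
          exact (le_div_iff₀ hτi).mpr hpv
        calc p' i ≤ x' i * (v i / τ i) := hpdiv
          _ ≤ x' i * ((1 + ε) * w i) := by
              apply mul_le_mul_of_nonneg_left (hratio i h2) hx0
          _ ≤ x' i * ((1 + ε) * wnext) := by
              apply mul_le_mul_of_nonneg_left _ hx0
              exact mul_le_mul_of_nonneg_left (hwle i h1 h2) hb0.le
      calc ∑ i ∈ Finset.Ico (k+1) n, p' i
          ≤ ∑ i ∈ Finset.Ico (k+1) n, x' i * ((1 + ε) * wnext) := Finset.sum_le_sum step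
        _ = (∑ i ∈ Finset.Ico (k+1) n, x' i) * ((1 + ε) * wnext) := by
            rw [Finset.sum_mul]
        _ ≤ 1 * ((1 + ε) * wnext) := by
            apply mul_le_mul_of_nonneg_right _ (by positivity)
            calc ∑ i ∈ Finset.Ico (k+1) n, x' i
                ≤ ∑ i ∈ Finset.range n, x' i := by
                  rw [Finset.range_eq_Ico]
                  apply Finset.sum_le_sum_of_subset_of_nonneg
                  · apply Finset.Ico_subset_Ico <;> omega
                  · intro i hi _
                    exact (hfeas i (Finset.mem_Ico.mp hi).2).1
              _ ≤ 1 := hsum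
        _ = (1 + ε) * wnext := one_mul _
    linarith
  -- Algorithm bounds: Bk ≤ (1+ε) ALG and wnext ≤ (1+ε) ALG
  have hBC : Bk ≤ (1 + ε) * ALG ∧ wnext ≤ (1 + ε) * ALG := by
    by_cases hcase : wnext < Bk
    · rw [if_pos hcase] at hxp
      set C : ℝ := (1 + ε) ^ (⌈Real.logb (1 + ε) Bk⌉ : ℤ) with hC
      have hCge : Bk ≤ C := by
        set L := Real.logb (1 + ε) Bk with hL
        have h1 : Bk = (1 + ε) ^ L := (Real.rpow_logb hb0 (ne_of_gt hb1) hBkpos).symm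
        have h2 : (1 + ε : ℝ) ^ L ≤ (1 + ε) ^ ((⌈L⌉ : ℤ) : ℝ) :=
          Real.rpow_le_rpow_of_exponent_le hb1.le (Int.le_ceil L)
        rw [Real.rpow_intCast] at h2
        rw [h1, hC]; exact h2
      have hALGval : ALG = C / (1 + ε) := by
        rw [hALG, Finset.range_eq_Ico,
          ← Finset.sum_Ico_consecutive _ (Nat.zero_le (k+1)) hkn']
        have e2 : ∑ i ∈ Finset.Ico (k+1) n, p i = 0 := by
          apply Finset.sum_eq_zero
          intro i hi
          obtain ⟨h1, h2⟩ := Finset.mem_Ico.mp hi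
          exact ((hxp i h2).2 h1).2
        have e1 : ∑ i ∈ Finset.Ico 0 (k+1), p i = C / (1 + ε) := by
          rw [← Finset.range_eq_Ico]
          have : ∀ i ∈ Finset.range (k+1), p i = B i * (C / ((1 + ε) * Bk)) := by
            intro i hi
            have hik : i ≤ k := by have := Finset.mem_range.mp hi; omega
            have hin : i < n := by omega
            obtain ⟨hx, hp⟩ := (hxp i hin).1 hik
            rw [hp, hx]; ring
          rw [Finset.sum_congr rfl this, ← Finset.sum_mul, ← hBk]
          field_simp
        rw [e1, e2, add_zero]
      constructor
      · rw [hALGval]; rw [mul_div_cancel₀ _ (ne_of_gt hb0)] ; exact hCge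
      · rw [hALGval, mul_div_cancel₀ _ (ne_of_gt hb0)]
        exact (hcase.le.trans hCge)
    · rw [if_neg hcase] at hxp
      push_neg at hcase
      have hk1n : k + 1 < n := by
        by_contra h
        rw [hwnext, if_neg h] at hcase
        linarith
      have hwnpos : 0 < wnext := lt_of_lt_of_le hBkpos hcase
      have hALGval : ALG = (∑ i ∈ Finset.range (k+1), p i) + p (k+1) := by
        rw [hALG, Finset.range_eq_Ico,
          ← Finset.sum_Ico_consecutive _ (Nat.zero_le (k+1)) hkn',
          ← Finset.sum_Ico_consecutive _ (show k+1 ≤ k+2 by omega) (show k+2 ≤ n by omega)]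
        have e3 : ∑ i ∈ Finset.Ico (k+2) n, p i = 0 := by
          apply Finset.sum_eq_zero
          intro i hi
          obtain ⟨h1, h2⟩ := Finset.mem_Ico.mp hi
          exact ((hxp i h2).2.2 h1).2
        have e2 : ∑ i ∈ Finset.Ico (k+1) (k+2), p i = p (k+1) := by
          rw [Finset.sum_Ico_eq_sum_range]
          simp
        rw [e2, e3, add_zero, ← Finset.range_eq_Ico]
      have hpk1 : p (k+1) = wnext / (1 + ε) - Bk / (1 + ε) := by
        obtain ⟨hx, hp⟩ := (hxp (k+1) hk1n).2.1 rfl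
        rw [hp, hx]
        field_simp
      have hsum1 : Bk / (1 + ε) ≤ ∑ i ∈ Finset.range (k+1), p i := by
        rw [hBk, Finset.sum_div]
        apply Finset.sum_le_sum
        intro i hi
        have hik : i ≤ k := by have := Finset.mem_range.mp hi; omega
        have hin : i < n := by omega
        obtain ⟨hx, hp⟩ := (hxp i hin).1 hik
        have hxnn : 0 ≤ x i := by
          rw [hx]; exact div_nonneg (hB i hin).le (mul_nonneg hb0.le hwnext0)
        have hbase : x i * wnext = B i / (1 + ε) := by
          rw [hx]; field_simp
        rw [hp]
        split
        · nlinarith [mul_nonneg hxnn hwnext0]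
        · rw [hbase]
      have hBk' : (1 + ε) * (Bk / (1 + ε)) = Bk := by field_simp
      have hwn' : (1 + ε) * (wnext / (1 + ε)) = wnext := by field_simp
      have hmul := mul_le_mul_of_nonneg_left hsum1 hb0.le
      have hpk1nn : 0 ≤ p (k+1) := by
        rw [hpk1, sub_nonneg]; gcongr
      constructor
      · rw [hALGval]
        nlinarith [mul_nonneg hb0.le hpk1nn]
      · rw [hALGval, hpk1]
        nlinarith
  obtain ⟨hBle, hwle'⟩ := hBC
  have hALGpos : 0 < ALG := by nlinarith
  rw [div_le_iff₀ (by positivity)]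
  apply Real.sSup_le
  · intro t ht
    have := hA t ht
    nlinarith
  · positivity
end

section
/- In Algorithm 6, for any fixed agent a and fixed profiles of the other agents, the allocated fraction x_a is non-increasing as the agent's reported ratio v_a/τ_a decreases. -/
/-- The reported ratio of each agent, rounded down to a power of `1+ε`. -/
noncomputable def wfun (n : ℕ) (ε : ℝ) (ρ : Fin n → ℝ) (i : Fin n) : ℝ :=
  (1 + ε) ^ (⌊Real.logb (1 + ε) (ρ i)⌋ : ℤ)

/-- The permutation sorting the agents in decreasing order of rounded ratio `wfun`,
breaking ties in a fixed manner (by agent index): position `t` holds agent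
`sortPerm n ε ρ t`. -/
noncomputable def sortPerm (n : ℕ) (ε : ℝ) (ρ : Fin n → ℝ) : Equiv.Perm (Fin n) :=
  Tuple.sort (fun i => (toLex (-(wfun n ε ρ i), i) : Lex (ℝ × Fin n)))

/-- The cumulative budget `B[t]` of the agents in the first `t+1` sorted positions. -/
noncomputable def bcum (n : ℕ) (ε : ℝ) (B ρ : Fin n → ℝ) (t : Fin n) : ℝ :=
  ∑ s ∈ Finset.univ.filter (fun s => s ≤ t), B (sortPerm n ε ρ s)

/-- The set of positions `t` with `B[t] ≤ w_{σ(t)}`; Algorithm 6 uses its maximum `k`. -/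
noncomputable def validSet (n : ℕ) (ε : ℝ) (B ρ : Fin n → ℝ) : Finset (Fin n) :=
  Finset.univ.filter (fun t => bcum n ε B ρ t ≤ wfun n ε ρ (sortPerm n ε ρ t))

-- helpers
noncomputable def kee (n : ℕ) (ε : ℝ) (ρ : Fin n → ℝ) (i : Fin n) : Lex (ℝ × Fin n) :=
  toLex (-(wfun n ε ρ i), i)

lemma sortPerm_eq (n ε ρ) : sortPerm n ε ρ = Tuple.sort (kee n ε ρ) := rfl

lemma kee_inj (n ε ρ) : Function.Injective (kee n ε ρ) := by
  intro i j h
  have := congrArg (fun x => (ofLex x).2) h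
  simpa [kee] using this

lemma kee_smono (n ε ρ) : StrictMono (kee n ε ρ ∘ sortPerm n ε ρ) := by
  rw [sortPerm_eq]
  exact (Tuple.monotone_sort (kee n ε ρ)).strictMono_of_injective
    ((kee_inj n ε ρ).comp (Tuple.sort (kee n ε ρ)).injective)

lemma symm_le_symm (n ε ρ) (i j : Fin n) :
    (sortPerm n ε ρ).symm i ≤ (sortPerm n ε ρ).symm j ↔ kee n ε ρ i ≤ kee n ε ρ j := by
  conv_rhs => rw [← (sortPerm n ε ρ).apply_symm_apply i, ← (sortPerm n ε ρ).apply_symm_apply j]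
  exact ((kee_smono n ε ρ).le_iff_le).symm

lemma symm_lt_symm (n ε ρ) (i j : Fin n) :
    (sortPerm n ε ρ).symm i < (sortPerm n ε ρ).symm j ↔ kee n ε ρ i < kee n ε ρ j := by
  conv_rhs => rw [← (sortPerm n ε ρ).apply_symm_apply i, ← (sortPerm n ε ρ).apply_symm_apply j]
  exact ((kee_smono n ε ρ).lt_iff_lt).symm

noncomputable def Tset (n : ℕ) (ε : ℝ) (ρ : Fin n → ℝ) (i : Fin n) : Finset (Fin n) :=
  Finset.univ.filter (fun j => kee n ε ρ j ≤ kee n ε ρ i)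

noncomputable def SB (n : ℕ) (ε : ℝ) (B ρ : Fin n → ℝ) (i : Fin n) : ℝ :=
  ∑ j ∈ Tset n ε ρ i, B j

lemma bcum_eq (n ε B ρ) (t : Fin n) :
    bcum n ε B ρ t = SB n ε B ρ (sortPerm n ε ρ t) := by
  unfold bcum SB
  apply Finset.sum_nbij' (fun s => sortPerm n ε ρ s) (fun j => (sortPerm n ε ρ).symm j)
  · intro s hs
    simp only [Finset.mem_filter, Finset.mem_univ, true_and] at hs ⊢
    simp only [Tset, Finset.mem_filter, Finset.mem_univ, true_and]
    exact (kee_smono n ε ρ).le_iff_le.mpr hs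
  · intro j hj
    simp only [Tset, Finset.mem_filter, Finset.mem_univ, true_and] at hj ⊢
    have : (sortPerm n ε ρ).symm j ≤ (sortPerm n ε ρ).symm (sortPerm n ε ρ t) :=
      (symm_le_symm n ε ρ _ _).mpr hj
    simpa using this
  · intro s _; exact (sortPerm n ε ρ).symm_apply_apply s
  · intro j _; exact (sortPerm n ε ρ).apply_symm_apply j
  · intro s _; rfl

lemma validSet_mem (n ε B ρ) (t : Fin n) :
    t ∈ validSet n ε B ρ ↔ SB n ε B ρ (sortPerm n ε ρ t) ≤ wfun n ε ρ (sortPerm n ε ρ t) := by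
  rw [validSet, Finset.mem_filter, bcum_eq]
  simp

lemma wfun_pos (n : ℕ) {ε : ℝ} (hε : 0 < ε) (ρ : Fin n → ℝ) (i : Fin n) : 0 < wfun n ε ρ i :=
  zpow_pos (by linarith) _

section kprops
variable (n : ℕ) (ε : ℝ) (B ρ : Fin n → ℝ) (hval : (validSet n ε B ρ).Nonempty)

-- P1: the agent at the max valid position is valid
lemma P1 : SB n ε B ρ (sortPerm n ε ρ ((validSet n ε B ρ).max' hval))
    ≤ wfun n ε ρ (sortPerm n ε ρ ((validSet n ε B ρ).max' hval)) :=
  (validSet_mem n ε B ρ _).mp ((validSet n ε B ρ).max'_mem hval)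

-- P2: any agent with strictly larger key is invalid
lemma P2 (j : Fin n)
    (hj : kee n ε ρ (sortPerm n ε ρ ((validSet n ε B ρ).max' hval)) < kee n ε ρ j) :
    wfun n ε ρ j < SB n ε B ρ j := by
  set k := (validSet n ε B ρ).max' hval
  have hpos : k < (sortPerm n ε ρ).symm j := by
    have := (symm_lt_symm n ε ρ (sortPerm n ε ρ k) j).mpr hj
    simpa using this
  have hnot : (sortPerm n ε ρ).symm j ∉ validSet n ε B ρ := by
    intro hmem
    exact absurd ((validSet n ε B ρ).le_max' _ hmem) (not_le.mpr hpos)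
  rw [validSet_mem, (sortPerm n ε ρ).apply_symm_apply] at hnot
  exact not_le.mp hnot

-- membership in top group
lemma top_iff (i : Fin n) :
    (sortPerm n ε ρ).symm i ≤ (validSet n ε B ρ).max' hval ↔
      kee n ε ρ i ≤ kee n ε ρ (sortPerm n ε ρ ((validSet n ε B ρ).max' hval)) := by
  conv_lhs => rw [← (sortPerm n ε ρ).symm_apply_apply ((validSet n ε B ρ).max' hval)]
  exact symm_le_symm n ε ρ _ _

end kprops

-- successor lemmas
section succ
variable (n : ℕ) (ε : ℝ) (B ρ : Fin n → ℝ) (hval : (validSet n ε B ρ).Nonempty)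

lemma succ_gt (h2 : ((validSet n ε B ρ).max' hval : ℕ) + 1 < n) :
    kee n ε ρ (sortPerm n ε ρ ((validSet n ε B ρ).max' hval)) <
      kee n ε ρ (sortPerm n ε ρ ⟨((validSet n ε B ρ).max' hval : ℕ) + 1, h2⟩) :=
  (kee_smono n ε ρ) (by exact Fin.lt_def.mpr (Nat.lt_succ_self _))

lemma succA_min (h2 : ((validSet n ε B ρ).max' hval : ℕ) + 1 < n) (j : Fin n)
    (hj : kee n ε ρ (sortPerm n ε ρ ((validSet n ε B ρ).max' hval)) < kee n ε ρ j) :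
    kee n ε ρ (sortPerm n ε ρ ⟨((validSet n ε B ρ).max' hval : ℕ) + 1, h2⟩) ≤ kee n ε ρ j := by
  set k := (validSet n ε B ρ).max' hval
  have h1 : k < (sortPerm n ε ρ).symm j := by
    have := (symm_lt_symm n ε ρ (sortPerm n ε ρ k) j).mpr hj
    simpa using this
  have h3 : (⟨(k : ℕ) + 1, h2⟩ : Fin n) ≤ (sortPerm n ε ρ).symm j := by
    rw [Fin.le_def]
    exact Nat.succ_le_of_lt (Fin.lt_def.mp h1)
  have := (kee_smono n ε ρ).le_iff_le.mpr h3
  simpa using this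

lemma pos_eq_succ_iff (h2 : ((validSet n ε B ρ).max' hval : ℕ) + 1 < n) (i : Fin n) :
    ((sortPerm n ε ρ).symm i : ℕ) = ((validSet n ε B ρ).max' hval : ℕ) + 1 ↔
      i = sortPerm n ε ρ ⟨((validSet n ε B ρ).max' hval : ℕ) + 1, h2⟩ := by
  constructor
  · intro h
    have : (sortPerm n ε ρ).symm i = ⟨((validSet n ε B ρ).max' hval : ℕ) + 1, h2⟩ :=
      Fin.ext h
    rw [← this, (sortPerm n ε ρ).apply_symm_apply]
  · intro h
    rw [h, (sortPerm n ε ρ).symm_apply_apply]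

lemma all_le_of_last (h2 : ¬ ((validSet n ε B ρ).max' hval : ℕ) + 1 < n) (j : Fin n) :
    kee n ε ρ j ≤ kee n ε ρ (sortPerm n ε ρ ((validSet n ε B ρ).max' hval)) := by
  set k := (validSet n ε B ρ).max' hval
  rw [← (top_iff n ε B ρ hval j)]
  rw [Fin.le_def]
  have := ((sortPerm n ε ρ).symm j).isLt
  omega

end succ

-- positivity of SB
lemma SB_pos (n : ℕ) (ε : ℝ) (B ρ : Fin n → ℝ) (hB : ∀ i, 0 < B i) (i : Fin n) :
    0 < SB n ε B ρ i := by
  apply Finset.sum_pos (fun j _ => hB j)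
  exact ⟨i, by simp [Tset]⟩

lemma SB_nonneg (n : ℕ) (ε : ℝ) (B ρ : Fin n → ℝ) (hB : ∀ i, 0 < B i) (i : Fin n) :
    0 ≤ SB n ε B ρ i := (SB_pos n ε B ρ hB i).le

-- cross-profile key facts
lemma kee_eq_of_eq (n : ℕ) (ε : ℝ) (ρ ρ' : Fin n → ℝ) (i : Fin n) (h : ρ' i = ρ i) :
    kee n ε ρ' i = kee n ε ρ i := by
  simp [kee, wfun, h]

lemma wfun_mono (n : ℕ) {ε : ℝ} (hε : 0 < ε) (ρ ρ' : Fin n → ℝ) (i : Fin n)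
    (h0 : 0 < ρ' i) (h : ρ' i ≤ ρ i) : wfun n ε ρ' i ≤ wfun n ε ρ i := by
  unfold wfun
  apply zpow_le_zpow_right₀ (by linarith)
  exact Int.floor_mono (Real.logb_le_logb_of_le (by linarith) h0 h)

lemma kee_le_of_wfun_le (n : ℕ) (ε : ℝ) (ρ ρ' : Fin n → ℝ) (i : Fin n)
    (h : wfun n ε ρ' i ≤ wfun n ε ρ i) : kee n ε ρ i ≤ kee n ε ρ' i := by
  unfold kee
  rw [Prod.Lex.le_iff]
  rcases lt_or_eq_of_le h with h | h
  · left; simpa using h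
  · right; simp [h]

lemma wfun_le_of_kee_lt (n : ℕ) (ε : ℝ) (ρ ρ' : Fin n → ℝ) (i j : Fin n)
    (h : kee n ε ρ i < kee n ε ρ' j) : wfun n ε ρ' j ≤ wfun n ε ρ i := by
  rw [kee, kee, Prod.Lex.lt_iff] at h
  rcases h with h | ⟨h, _⟩
  · simp only [ofLex_toLex] at h; linarith
  · simp only [ofLex_toLex] at h; linarith

lemma wfun_le_of_kee_le (n : ℕ) (ε : ℝ) (ρ ρ' : Fin n → ℝ) (i j : Fin n)
    (h : kee n ε ρ i ≤ kee n ε ρ' j) : wfun n ε ρ' j ≤ wfun n ε ρ i := by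
  rw [kee, kee, Prod.Lex.le_iff] at h
  rcases h with h | ⟨h, _⟩
  · simp only [ofLex_toLex] at h; linarith
  · simp only [ofLex_toLex] at h; linarith

open Classical in
/-- Algorithm 6 (single divisible item with public budgets), as a function of the
budgets `B` and the reported ratios `ρ i` (standing for `v i / τ i`): returns the
allocation and payment of every agent.  With `k` the maximum valid position,
market clearing price `p̄ = max (B[k]) w_{k+1}` (where `w_{k+1} = 0` if `k` is last):
if `B[k] > w_{k+1}`, the top-`k` agents get `B i/((1+ε)B[k])` at per-unit price
`C[k] = (1+ε)^⌈log_{1+ε} B[k]⌉`; otherwise they get `B i/((1+ε)w_{k+1})` at per-unit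
price `(1+ε)w_{k+1}` (or `w_{k+1}` if `w i = w_{k+1}`), and the agent at position `k+1`
gets the leftover `1/(1+ε) − B[k]/((1+ε)w_{k+1})` at per-unit price `w_{k+1}`. -/
noncomputable def mech (n : ℕ) (ε : ℝ) (B ρ : Fin n → ℝ) :
    (Fin n → ℝ) × (Fin n → ℝ) :=
  if h : (validSet n ε B ρ).Nonempty then
    let σ := sortPerm n ε ρ
    let k := (validSet n ε B ρ).max' h
    let Bk := bcum n ε B ρ k
    let wnext : ℝ :=
      if h2 : (k : ℕ) + 1 < n then wfun n ε ρ (σ ⟨(k : ℕ) + 1, h2⟩) else 0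
    if wnext < Bk then
      let C : ℝ := (1 + ε) ^ (⌈Real.logb (1 + ε) Bk⌉ : ℤ)
      (fun a => if σ.symm a ≤ k then B a / ((1 + ε) * Bk) else 0,
       fun a => if σ.symm a ≤ k then (B a / ((1 + ε) * Bk)) * C else 0)
    else
      (fun a => if σ.symm a ≤ k then B a / ((1 + ε) * wnext)
        else if (σ.symm a : ℕ) = (k : ℕ) + 1 then
          1 / (1 + ε) - Bk / ((1 + ε) * wnext)
        else 0,
       fun a => if σ.symm a ≤ k then
          (if wnext < wfun n ε ρ a then (B a / ((1 + ε) * wnext)) * ((1 + ε) * wnext)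
           else (B a / ((1 + ε) * wnext)) * wnext)
        else if (σ.symm a : ℕ) = (k : ℕ) + 1 then
          (1 / (1 + ε) - Bk / ((1 + ε) * wnext)) * wnext
        else 0)
  else (fun _ => 0, fun _ => 0)

lemma mech_fst (n : ℕ) (ε : ℝ) (B ρ : Fin n → ℝ) (hval : (validSet n ε B ρ).Nonempty)
    (a : Fin n) :
    (mech n ε B ρ).1 a =
      if (if h2 : (((validSet n ε B ρ).max' hval : ℕ)) + 1 < n then
            wfun n ε ρ (sortPerm n ε ρ ⟨(((validSet n ε B ρ).max' hval : ℕ)) + 1, h2⟩) else 0)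
          < bcum n ε B ρ ((validSet n ε B ρ).max' hval) then
        (if (sortPerm n ε ρ).symm a ≤ (validSet n ε B ρ).max' hval then
          B a / ((1 + ε) * bcum n ε B ρ ((validSet n ε B ρ).max' hval)) else 0)
      else
        (if (sortPerm n ε ρ).symm a ≤ (validSet n ε B ρ).max' hval then
          B a / ((1 + ε) * (if h2 : (((validSet n ε B ρ).max' hval : ℕ)) + 1 < n then
            wfun n ε ρ (sortPerm n ε ρ ⟨(((validSet n ε B ρ).max' hval : ℕ)) + 1, h2⟩) else 0))
        else if ((sortPerm n ε ρ).symm a : ℕ) = (((validSet n ε B ρ).max' hval : ℕ)) + 1 then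
          1 / (1 + ε) - bcum n ε B ρ ((validSet n ε B ρ).max' hval) /
            ((1 + ε) * (if h2 : (((validSet n ε B ρ).max' hval : ℕ)) + 1 < n then
              wfun n ε ρ (sortPerm n ε ρ ⟨(((validSet n ε B ρ).max' hval : ℕ)) + 1, h2⟩) else 0))
        else 0) := by
  rw [mech, dif_pos hval]
  exact apply_ite (fun p : (Fin n → ℝ) × (Fin n → ℝ) => p.1 a) _ _ _

lemma Tset_subset (n : ℕ) (ε : ℝ) (ρ ρ' : Fin n → ℝ) (a i i' : Fin n)
    (hother : ∀ j, j ≠ a → ρ' j = ρ j)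
    (hkey : ∀ j, j ≠ a → kee n ε ρ j ≤ kee n ε ρ i → kee n ε ρ j ≤ kee n ε ρ' i')
    (hA : kee n ε ρ a ≤ kee n ε ρ i → kee n ε ρ' a ≤ kee n ε ρ' i') :
    Tset n ε ρ i ⊆ Tset n ε ρ' i' := by
  intro j hj
  simp only [Tset, Finset.mem_filter, Finset.mem_univ, true_and] at hj ⊢
  by_cases hja : j = a
  · subst hja; exact hA hj
  · rw [kee_eq_of_eq n ε ρ ρ' j (hother j hja)]
    exact hkey j hja hj

lemma SB_le_of_subset (n : ℕ) (ε : ℝ) (B : Fin n → ℝ) (hB : ∀ i, 0 < B i)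
    {ρ ρ' : Fin n → ℝ} {i i' : Fin n} (h : Tset n ε ρ i ⊆ Tset n ε ρ' i') :
    SB n ε B ρ i ≤ SB n ε B ρ' i' :=
  Finset.sum_le_sum_of_subset_of_nonneg h (fun j _ _ => (hB j).le)

/-- If `a` is the immediate successor of `m'`, then `SB a ≤ SB m' + B a`. -/
lemma SB_succ_split (n : ℕ) (ε : ℝ) (B ρ' : Fin n → ℝ) (hB : ∀ i, 0 < B i) (m' a : Fin n)
    (hlt : kee n ε ρ' m' < kee n ε ρ' a)
    (hmin : ∀ j, kee n ε ρ' m' < kee n ε ρ' j → kee n ε ρ' a ≤ kee n ε ρ' j) :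
    SB n ε B ρ' a ≤ SB n ε B ρ' m' + B a := by
  have hmem : a ∈ Tset n ε ρ' a := by simp [Tset]
  have hsub : (Tset n ε ρ' a).erase a ⊆ Tset n ε ρ' m' := by
    intro j hj
    rw [Finset.mem_erase] at hj
    obtain ⟨hja, hj⟩ := hj
    simp only [Tset, Finset.mem_filter, Finset.mem_univ, true_and] at hj ⊢
    by_contra hcon
    have h1 : kee n ε ρ' a ≤ kee n ε ρ' j := hmin j (not_le.mp hcon)
    have : kee n ε ρ' j = kee n ε ρ' a := le_antisymm hj h1
    exact hja (kee_inj n ε ρ' this)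
  calc SB n ε B ρ' a = ∑ j ∈ (Tset n ε ρ' a).erase a, B j + B a := by
        rw [Finset.sum_erase_add _ _ hmem]; rfl
    _ ≤ SB n ε B ρ' m' + B a := by
        gcongr
        exact Finset.sum_le_sum_of_subset_of_nonneg hsub (fun j _ _ => (hB j).le)

noncomputable def mtop (n : ℕ) (ε : ℝ) (B ρ : Fin n → ℝ) (hval : (validSet n ε B ρ).Nonempty) :
    Fin n := sortPerm n ε ρ ((validSet n ε B ρ).max' hval)

noncomputable def wnx (n : ℕ) (ε : ℝ) (B ρ : Fin n → ℝ) (hval : (validSet n ε B ρ).Nonempty) :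
    ℝ :=
  if h2 : ((validSet n ε B ρ).max' hval : ℕ) + 1 < n then
    wfun n ε ρ (sortPerm n ε ρ ⟨((validSet n ε B ρ).max' hval : ℕ) + 1, h2⟩) else 0

section mechlems
variable (n : ℕ) (ε : ℝ) (B ρ : Fin n → ℝ) (hval : (validSet n ε B ρ).Nonempty)

lemma wnx_nonneg (hε : 0 < ε) : 0 ≤ wnx n ε B ρ hval := by
  unfold wnx; split
  · exact (wfun_pos n hε ρ _).le
  · exact le_refl 0

lemma P1x : SB n ε B ρ (mtop n ε B ρ hval) ≤ wfun n ε ρ (mtop n ε B ρ hval) := P1 n ε B ρ hval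

lemma P2x (j : Fin n) (hj : kee n ε ρ (mtop n ε B ρ hval) < kee n ε ρ j) :
    wfun n ε ρ j < SB n ε B ρ j := P2 n ε B ρ hval j hj

lemma topx (i : Fin n) :
    (sortPerm n ε ρ).symm i ≤ (validSet n ε B ρ).max' hval ↔
      kee n ε ρ i ≤ kee n ε ρ (mtop n ε B ρ hval) := top_iff n ε B ρ hval i

lemma wnx_spec :
    (wnx n ε B ρ hval = 0 ∧ (∀ j, kee n ε ρ j ≤ kee n ε ρ (mtop n ε B ρ hval)) ∧
      (∀ j : Fin n, ((sortPerm n ε ρ).symm j : ℕ) ≠ ((validSet n ε B ρ).max' hval : ℕ) + 1))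
    ∨ (∃ s : Fin n, wnx n ε B ρ hval = wfun n ε ρ s
        ∧ kee n ε ρ (mtop n ε B ρ hval) < kee n ε ρ s
        ∧ (∀ j, kee n ε ρ (mtop n ε B ρ hval) < kee n ε ρ j → kee n ε ρ s ≤ kee n ε ρ j)
        ∧ (∀ j : Fin n, ((sortPerm n ε ρ).symm j : ℕ) = ((validSet n ε B ρ).max' hval : ℕ) + 1
            ↔ j = s)) := by
  by_cases h2 : ((validSet n ε B ρ).max' hval : ℕ) + 1 < n
  · right
    refine ⟨sortPerm n ε ρ ⟨((validSet n ε B ρ).max' hval : ℕ) + 1, h2⟩, ?_, ?_, ?_, ?_⟩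
    · unfold wnx; rw [dif_pos h2]
    · exact succ_gt n ε B ρ hval h2
    · exact succA_min n ε B ρ hval h2
    · exact pos_eq_succ_iff n ε B ρ hval h2
  · left
    refine ⟨by unfold wnx; rw [dif_neg h2], all_le_of_last n ε B ρ hval h2, ?_⟩
    intro j
    have := ((sortPerm n ε ρ).symm j).isLt
    omega

lemma mech_fold (a : Fin n) :
    (mech n ε B ρ).1 a =
      if wnx n ε B ρ hval < SB n ε B ρ (mtop n ε B ρ hval) then
        (if (sortPerm n ε ρ).symm a ≤ (validSet n ε B ρ).max' hval then
          B a / ((1 + ε) * SB n ε B ρ (mtop n ε B ρ hval)) else 0)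
      else
        (if (sortPerm n ε ρ).symm a ≤ (validSet n ε B ρ).max' hval then
          B a / ((1 + ε) * wnx n ε B ρ hval)
        else if ((sortPerm n ε ρ).symm a : ℕ) = ((validSet n ε B ρ).max' hval : ℕ) + 1 then
          1 / (1 + ε) - SB n ε B ρ (mtop n ε B ρ hval) / ((1 + ε) * wnx n ε B ρ hval)
        else 0) := by
  rw [mech_fst n ε B ρ hval a, bcum_eq]
  exact rfl

lemma mech_top (a : Fin n)
    (h : kee n ε ρ a ≤ kee n ε ρ (mtop n ε B ρ hval)) :
    (mech n ε B ρ).1 a =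
      B a / ((1 + ε) * max (SB n ε B ρ (mtop n ε B ρ hval)) (wnx n ε B ρ hval)) := by
  have hpos := (topx n ε B ρ hval a).mpr h
  rw [mech_fold n ε B ρ hval a]
  by_cases hb : wnx n ε B ρ hval < SB n ε B ρ (mtop n ε B ρ hval)
  · rw [if_pos hb, if_pos hpos, max_eq_left hb.le]
  · rw [if_neg hb, if_pos hpos, max_eq_right (not_lt.mp hb)]

lemma mech_mid (a : Fin n)
    (heq : ((sortPerm n ε ρ).symm a : ℕ) = ((validSet n ε B ρ).max' hval : ℕ) + 1)
    (hc : ¬ wnx n ε B ρ hval < SB n ε B ρ (mtop n ε B ρ hval)) :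
    (mech n ε B ρ).1 a = 1 / (1 + ε) -
      SB n ε B ρ (mtop n ε B ρ hval) / ((1 + ε) * wnx n ε B ρ hval) := by
  have h1 : ¬ (sortPerm n ε ρ).symm a ≤ (validSet n ε B ρ).max' hval := by
    rw [Fin.le_def]; omega
  rw [mech_fold n ε B ρ hval a, if_neg hc, if_neg h1, if_pos heq]

lemma mech_zero (a : Fin n)
    (h1 : ¬ kee n ε ρ a ≤ kee n ε ρ (mtop n ε B ρ hval))
    (hor : ((sortPerm n ε ρ).symm a : ℕ) ≠ ((validSet n ε B ρ).max' hval : ℕ) + 1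
        ∨ wnx n ε B ρ hval < SB n ε B ρ (mtop n ε B ρ hval)) :
    (mech n ε B ρ).1 a = 0 := by
  have h1' : ¬ (sortPerm n ε ρ).symm a ≤ (validSet n ε B ρ).max' hval := by
    rw [topx n ε B ρ hval a]; exact h1
  rw [mech_fold n ε B ρ hval a]
  by_cases hb : wnx n ε B ρ hval < SB n ε B ρ (mtop n ε B ρ hval)
  · rw [if_pos hb, if_neg h1']
  · rcases hor with hne | hlt
    · rw [if_neg hb, if_neg h1', if_neg hne]
    · exact absurd hlt hb

lemma mech_nonneg (hε : 0 < ε) (hB : ∀ i, 0 < B i) (a : Fin n) :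
    0 ≤ (mech n ε B ρ).1 a := by
  have hε1 : (0:ℝ) < 1 + ε := by linarith
  by_cases hval : (validSet n ε B ρ).Nonempty
  · rw [mech_fold n ε B ρ hval a]
    have hS := SB_pos n ε B ρ hB (mtop n ε B ρ hval)
    have hW := wnx_nonneg n ε B ρ hval hε
    split_ifs with h1 h2 h3 h4
    all_goals try exact le_refl (0:ℝ)
    all_goals try exact div_nonneg (hB a).le (by nlinarith)
    all_goals try {
      have hSW : SB n ε B ρ (mtop n ε B ρ hval) ≤ wnx n ε B ρ hval := not_lt.mp (by assumption)
      have hWpos : 0 < wnx n ε B ρ hval := lt_of_lt_of_le hS hSW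
      rw [sub_nonneg, div_le_div_iff₀ (by nlinarith) hε1]
      nlinarith }
  · rw [mech, dif_neg hval]

end mechlems

/-- Monotonicity of Algorithm 6's allocation: for a fixed agent `a` and fixed reports
of the other agents, the fraction allocated to `a` is non-increasing as her reported
ratio `v a / τ a` decreases (both reports being in the algorithm's domain, i.e. a
maximal valid index exists in both runs). -/
theorem stmt_12 (n : ℕ) (ε : ℝ) (hε : 0 < ε) (B ρ ρ' : Fin n → ℝ) (a : Fin n)
    (hB : ∀ i, 0 < B i) (hρ : ∀ i, 0 < ρ i) (hρ' : ∀ i, 0 < ρ' i)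
    (hother : ∀ i, i ≠ a → ρ' i = ρ i) (hdec : ρ' a ≤ ρ a)
    (hval : (validSet n ε B ρ).Nonempty) (hval' : (validSet n ε B ρ').Nonempty) :
    (mech n ε B ρ').1 a ≤ (mech n ε B ρ).1 a := by
  have hε1 : (0:ℝ) < 1 + ε := by linarith
  have hw : ∀ i, 0 < wfun n ε ρ i := wfun_pos n hε ρ
  have hw' : ∀ i, 0 < wfun n ε ρ' i := wfun_pos n hε ρ'
  have hf2 : ∀ j, j ≠ a → kee n ε ρ' j = kee n ε ρ j :=
    fun j hj => kee_eq_of_eq n ε ρ ρ' j (hother j hj)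
  have hf2w : ∀ j, j ≠ a → wfun n ε ρ' j = wfun n ε ρ j := fun j hj => by
    simp [wfun, hother j hj]
  have hf3 : wfun n ε ρ' a ≤ wfun n ε ρ a := wfun_mono n hε ρ ρ' a (hρ' a) hdec
  have hf1 : kee n ε ρ a ≤ kee n ε ρ' a := kee_le_of_wfun_le n ε ρ ρ' a hf3
  have hP1 := P1x n ε B ρ hval
  have hP1' := P1x n ε B ρ' hval'
  have hP2 := P2x n ε B ρ hval
  have hP2' := P2x n ε B ρ' hval'
  have hSpos := SB_pos n ε B ρ hB
  have hSpos' := SB_pos n ε B ρ' hB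
  -- valid agents (≠ a) under ρ stay weakly above position of m' under ρ'
  have hVV : ∀ i, i ≠ a → SB n ε B ρ i ≤ wfun n ε ρ i →
      kee n ε ρ i ≤ kee n ε ρ' (mtop n ε B ρ' hval') := by
    intro i hia hvalid
    by_contra hcon
    have hlt : kee n ε ρ' (mtop n ε B ρ' hval') < kee n ε ρ' i := by
      rw [hf2 i hia]; exact not_le.mp hcon
    have hTi : Tset n ε ρ' i ⊆ Tset n ε ρ i := by
      apply Tset_subset n ε ρ' ρ a i i (fun j hj => (hother j hj).symm)
      · intro j hj hle
        rw [hf2 j hj, hf2 i hia] at hle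
        rw [hf2 j hj]
        exact hle
      · intro h
        refine hf1.trans ?_
        rw [← hf2 i hia]
        exact h
    have h5 : SB n ε B ρ' i ≤ SB n ε B ρ i := SB_le_of_subset n ε B hB hTi
    have h7 := hP2' i hlt
    rw [hf2w i hia] at h7
    linarith
  by_cases hA : kee n ε ρ' a ≤ kee n ε ρ' (mtop n ε B ρ' hval')
  · -- CASE A : a is in the top group under ρ'
    have hKaKm : kee n ε ρ a ≤ kee n ε ρ (mtop n ε B ρ hval) := by
      by_cases hm'a : mtop n ε B ρ' hval' = a
      · have hvalA : SB n ε B ρ' a ≤ wfun n ε ρ' a := by rw [← hm'a]; exact hP1'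
        have hTa : Tset n ε ρ a ⊆ Tset n ε ρ' a := by
          apply Tset_subset n ε ρ ρ' a a a hother
          · intro j hj hle
            exact hle.trans hf1
          · exact fun _ => le_refl _
        have hSa : SB n ε B ρ a ≤ wfun n ε ρ a :=
          le_trans (SB_le_of_subset n ε B hB hTa) (le_trans hvalA hf3)
        by_contra hcon
        exact absurd hSa (not_le.mpr (hP2 a (not_le.mp hcon)))
      · have hTm' : Tset n ε ρ (mtop n ε B ρ' hval') ⊆ Tset n ε ρ' (mtop n ε B ρ' hval') := by
          apply Tset_subset n ε ρ ρ' a _ _ hother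
          · intro j hj hle
            exact hle.trans (le_of_eq (hf2 _ hm'a).symm)
          · exact fun _ => hA
        have hSm' : SB n ε B ρ (mtop n ε B ρ' hval') ≤ wfun n ε ρ (mtop n ε B ρ' hval') := by
          have h5 := SB_le_of_subset n ε B hB hTm'
          have h6 := hf2w _ hm'a
          linarith [hP1']
        have hKm'm : kee n ε ρ (mtop n ε B ρ' hval') ≤ kee n ε ρ (mtop n ε B ρ hval) := by
          by_contra hcon
          exact absurd hSm' (not_le.mpr (hP2 _ (not_le.mp hcon)))
        calc kee n ε ρ a ≤ kee n ε ρ' a := hf1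
          _ ≤ kee n ε ρ' (mtop n ε B ρ' hval') := hA
          _ = kee n ε ρ (mtop n ε B ρ' hval') := hf2 _ hm'a
          _ ≤ kee n ε ρ (mtop n ε B ρ hval) := hKm'm
    rw [mech_top n ε B ρ hval a hKaKm, mech_top n ε B ρ' hval' a hA]
    have hKmKm' : kee n ε ρ (mtop n ε B ρ hval) ≤ kee n ε ρ' (mtop n ε B ρ' hval') := by
      by_cases hma : mtop n ε B ρ hval = a
      · rw [hma]; exact hf1.trans hA
      · exact hVV _ hma hP1
    have hTm : Tset n ε ρ (mtop n ε B ρ hval) ⊆ Tset n ε ρ' (mtop n ε B ρ' hval') := by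
      apply Tset_subset n ε ρ ρ' a _ _ hother
      · intro j hj hle
        exact hle.trans hKmKm'
      · exact fun _ => hA
    have hSS : SB n ε B ρ (mtop n ε B ρ hval) ≤ SB n ε B ρ' (mtop n ε B ρ' hval') :=
      SB_le_of_subset n ε B hB hTm
    have hWle : wnx n ε B ρ hval ≤
        max (SB n ε B ρ' (mtop n ε B ρ' hval')) (wnx n ε B ρ' hval') := by
      rcases wnx_spec n ε B ρ hval with ⟨hW0, _, _⟩ | ⟨s, hWs, hKs, hsmin, hposiff⟩
      · rw [hW0]; exact le_max_of_le_left (hSpos' _).le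
      · have hsa : s ≠ a := by
          intro h; rw [h] at hKs; exact absurd hKaKm (not_le.mpr hKs)
        by_cases hss : kee n ε ρ' s ≤ kee n ε ρ' (mtop n ε B ρ' hval')
        · have hTs : Tset n ε ρ s ⊆ Tset n ε ρ' (mtop n ε B ρ' hval') := by
            apply Tset_subset n ε ρ ρ' a _ _ hother
            · intro j hj hle
              refine hle.trans ?_
              rw [← hf2 s hsa]; exact hss
            · exact fun _ => hA
          have h8 : SB n ε B ρ s ≤ SB n ε B ρ' (mtop n ε B ρ' hval') :=
            SB_le_of_subset n ε B hB hTs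
          have h9 := hP2 s hKs
          rw [hWs]; exact le_max_of_le_left (by linarith)
        · rcases wnx_spec n ε B ρ' hval' with ⟨_, hall', _⟩ | ⟨s', hWs', hKs', hsmin', _⟩
          · exact absurd (hall' s) hss
          · have h10 : kee n ε ρ' s' ≤ kee n ε ρ' s := hsmin' s (not_le.mp hss)
            have h11 : wfun n ε ρ' s ≤ wfun n ε ρ' s' := wfun_le_of_kee_le n ε ρ' ρ' s' s h10
            rw [hWs, hWs', ← hf2w s hsa]
            exact le_max_of_le_right h11
    have h1max : 0 < max (SB n ε B ρ (mtop n ε B ρ hval)) (wnx n ε B ρ hval) :=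
      lt_of_lt_of_le (hSpos _) (le_max_left _ _)
    have h2max : max (SB n ε B ρ (mtop n ε B ρ hval)) (wnx n ε B ρ hval)
        ≤ max (SB n ε B ρ' (mtop n ε B ρ' hval')) (wnx n ε B ρ' hval') :=
      max_le (hSS.trans (le_max_left _ _)) hWle
    rw [div_le_div_iff₀ (mul_pos hε1 (lt_of_lt_of_le h1max h2max)) (mul_pos hε1 h1max)]
    exact mul_le_mul_of_nonneg_left (mul_le_mul_of_nonneg_left h2max hε1.le) (hB a).le
  · -- CASE B : a is not in the top group under ρ'
    have hm'a : kee n ε ρ' (mtop n ε B ρ' hval') < kee n ε ρ' a := not_le.mp hA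
    rcases wnx_spec n ε B ρ' hval' with ⟨_, hall', _⟩ | ⟨s', hWs', hKs', hsmin', hposiff'⟩
    · exact absurd (hall' a) hA
    by_cases has' : a = s'
    case neg =>
      have hne : ((sortPerm n ε ρ').symm a : ℕ) ≠ ((validSet n ε B ρ').max' hval' : ℕ) + 1 :=
        fun h => has' ((hposiff' a).mp h)
      rw [mech_zero n ε B ρ' hval' a hA (Or.inl hne)]
      exact mech_nonneg n ε B ρ hε hB a
    case pos =>
      by_cases hb' : wnx n ε B ρ' hval' < SB n ε B ρ' (mtop n ε B ρ' hval')
      · rw [mech_zero n ε B ρ' hval' a hA (Or.inr hb')]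
        exact mech_nonneg n ε B ρ hε hB a
      · -- a is the leftover agent under ρ'
        have heq' : ((sortPerm n ε ρ').symm a : ℕ) = ((validSet n ε B ρ').max' hval' : ℕ) + 1 :=
          (hposiff' a).mpr has'
        have hWa : wnx n ε B ρ' hval' = wfun n ε ρ' a := by rw [hWs', ← has']
        rw [mech_mid n ε B ρ' hval' a heq' hb', hWa]
        have hsuccmin' : ∀ j, kee n ε ρ' (mtop n ε B ρ' hval') < kee n ε ρ' j →
            kee n ε ρ' a ≤ kee n ε ρ' j := by
          intro j hj; rw [has']; exact hsmin' j hj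
        have hS'W : SB n ε B ρ' (mtop n ε B ρ' hval') ≤ wfun n ε ρ' a := by
          rw [← hWa]; exact not_lt.mp hb'
        have hinva : wfun n ε ρ' a < SB n ε B ρ' a := hP2' a hm'a
        have hS'a : SB n ε B ρ' a ≤ SB n ε B ρ' (mtop n ε B ρ' hval') + B a :=
          SB_succ_split n ε B ρ' hB _ a hm'a hsuccmin'
        by_cases hin : kee n ε ρ a ≤ kee n ε ρ (mtop n ε B ρ hval)
        · -- B1 : a still in the top group under ρ
          rw [mech_top n ε B ρ hval a hin]
          have hKmK'a : ∀ j, j ≠ a → kee n ε ρ j ≤ kee n ε ρ (mtop n ε B ρ hval) →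
              kee n ε ρ j ≤ kee n ε ρ' a := by
            intro j hj hle
            by_cases hma : mtop n ε B ρ hval = a
            · rw [hma] at hle; exact hle.trans hf1
            · exact hle.trans ((hVV _ hma hP1).trans hm'a.le)
          have hTm : Tset n ε ρ (mtop n ε B ρ hval) ⊆ Tset n ε ρ' a :=
            Tset_subset n ε ρ ρ' a _ a hother hKmK'a (fun _ => le_refl _)
          have hSmS'a : SB n ε B ρ (mtop n ε B ρ hval) ≤ SB n ε B ρ' a :=
            SB_le_of_subset n ε B hB hTm
          have hWle : wnx n ε B ρ hval ≤
              max (wfun n ε ρ' a) (SB n ε B ρ' (mtop n ε B ρ' hval') + B a) := by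
            rcases wnx_spec n ε B ρ hval with ⟨hW0, _, _⟩ | ⟨s, hWs, hKs, hsmin, _⟩
            · rw [hW0]
              have h15 := hSpos' (mtop n ε B ρ' hval')
              have h16 := hB a
              exact le_max_of_le_right (by linarith)
            · have hsa : s ≠ a := by
                intro h; rw [h] at hKs; exact absurd hin (not_le.mpr hKs)
              by_cases hss : kee n ε ρ' s ≤ kee n ε ρ' (mtop n ε B ρ' hval')
              · have hTs : Tset n ε ρ s ⊆ Tset n ε ρ' a := by
                  apply Tset_subset n ε ρ ρ' a _ _ hother
                  · intro j hj hle
                    refine hle.trans ?_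
                    rw [← hf2 s hsa]
                    exact hss.trans hm'a.le
                  · exact fun _ => le_refl _
                have h8 := SB_le_of_subset n ε B hB hTs
                have h9 := hP2 s hKs
                rw [hWs]
                refine le_max_of_le_right ?_
                linarith
              · have h10 : kee n ε ρ' a ≤ kee n ε ρ' s := hsuccmin' s (not_le.mp hss)
                have h11 : wfun n ε ρ' s ≤ wfun n ε ρ' a := wfun_le_of_kee_le n ε ρ' ρ' a s h10
                rw [hWs, ← hf2w s hsa]
                exact le_max_of_le_left h11
          -- numeric finish for B1
          have hXpos : 0 < max (SB n ε B ρ (mtop n ε B ρ hval)) (wnx n ε B ρ hval) :=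
            lt_of_lt_of_le (hSpos _) (le_max_left _ _)
          have hX2 : max (SB n ε B ρ (mtop n ε B ρ hval)) (wnx n ε B ρ hval)
              ≤ SB n ε B ρ' (mtop n ε B ρ' hval') + B a := by
            refine max_le (by linarith) (hWle.trans ?_)
            exact max_le (by linarith) le_rfl
          have ht0 : 0 ≤ wfun n ε ρ' a - SB n ε B ρ' (mtop n ε B ρ' hval') := by linarith
          have htBa : wfun n ε ρ' a - SB n ε B ρ' (mtop n ε B ρ' hval') ≤ B a := by linarith
          have hstep : (wfun n ε ρ' a - SB n ε B ρ' (mtop n ε B ρ' hval'))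
              * max (SB n ε B ρ (mtop n ε B ρ hval)) (wnx n ε B ρ hval)
              ≤ B a * wfun n ε ρ' a := by
            nlinarith [mul_nonneg (hSpos' (mtop n ε B ρ' hval')).le (sub_nonneg.mpr htBa),
              mul_le_mul_of_nonneg_left hX2 ht0]
          have hrw : 1/(1+ε) - SB n ε B ρ' (mtop n ε B ρ' hval')/((1+ε) * wfun n ε ρ' a)
              = (wfun n ε ρ' a - SB n ε B ρ' (mtop n ε B ρ' hval'))/((1+ε) * wfun n ε ρ' a) := by
            have hne1 : (1+ε) ≠ 0 := ne_of_gt hε1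
            have hne2 : wfun n ε ρ' a ≠ 0 := ne_of_gt (hw' a)
            field_simp
          rw [hrw, div_le_div_iff₀ (mul_pos hε1 (hw' a)) (mul_pos hε1 hXpos)]
          nlinarith [mul_le_mul_of_nonneg_left hstep hε1.le]
        · -- a is not in the top group under ρ either
          rcases wnx_spec n ε B ρ hval with ⟨_, hall, _⟩ | ⟨s, hWs, hKs, hsmin, hposiff⟩
          · exact absurd (hall a) hin
          by_cases has : a = s
          case pos =>
            -- a is the leftover agent under ρ as well
            have heqR : ((sortPerm n ε ρ).symm a : ℕ) = ((validSet n ε B ρ).max' hval : ℕ) + 1 :=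
              (hposiff a).mpr has
            have hKma : kee n ε ρ (mtop n ε B ρ hval) < kee n ε ρ a := by
              rw [has]; exact hKs
            have hmnea : mtop n ε B ρ hval ≠ a := by
              intro h; rw [h] at hKma; exact lt_irrefl _ hKma
            have hKmm' : kee n ε ρ (mtop n ε B ρ hval) ≤ kee n ε ρ' (mtop n ε B ρ' hval') :=
              hVV _ hmnea hP1
            have hTm2 : Tset n ε ρ (mtop n ε B ρ hval) ⊆ Tset n ε ρ' (mtop n ε B ρ' hval') := by
              apply Tset_subset n ε ρ ρ' a _ _ hother
              · intro j hj hle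
                exact hle.trans hKmm'
              · exact fun hcon => absurd hcon (not_le.mpr hKma)
            have hSmS' : SB n ε B ρ (mtop n ε B ρ hval) ≤ SB n ε B ρ' (mtop n ε B ρ' hval') :=
              SB_le_of_subset n ε B hB hTm2
            have hWaR : wnx n ε B ρ hval = wfun n ε ρ a := by rw [hWs, ← has]
            by_cases hbR : wnx n ε B ρ hval < SB n ε B ρ (mtop n ε B ρ hval)
            · exfalso
              rw [hWaR] at hbR
              linarith
            · rw [mech_mid n ε B ρ hval a heqR hbR, hWaR]
              have hnum : SB n ε B ρ (mtop n ε B ρ hval) / ((1+ε) * wfun n ε ρ a)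
                  ≤ SB n ε B ρ' (mtop n ε B ρ' hval') / ((1+ε) * wfun n ε ρ' a) := by
                rw [div_le_div_iff₀ (mul_pos hε1 (hw a)) (mul_pos hε1 (hw' a))]
                nlinarith [mul_le_mul hSmS' hf3 (hw' a).le (hSpos' (mtop n ε B ρ' hval')).le]
              linarith
          case neg =>
            -- a strictly below the leftover position under ρ: impossible
            exfalso
            have hssa : kee n ε ρ s < kee n ε ρ a := by
              have h12 : kee n ε ρ s ≤ kee n ε ρ a := hsmin a (not_le.mp hin)
              rcases h12.lt_or_eq with h | h
              · exact h
              · exact absurd (kee_inj n ε ρ h) (fun hh => has hh.symm)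
            have hsa : s ≠ a := by
              intro h; rw [h] at hssa; exact lt_irrefl _ hssa
            have hwas : wfun n ε ρ a ≤ wfun n ε ρ s := wfun_le_of_kee_le n ε ρ ρ s a hssa.le
            have hinvs : wfun n ε ρ s < SB n ε B ρ s := hP2 s hKs
            have hKs'm' : kee n ε ρ' s ≤ kee n ε ρ' (mtop n ε B ρ' hval') := by
              by_contra hcon
              have h13 := hsuccmin' s (not_le.mp hcon)
              rw [hf2 s hsa] at h13
              exact absurd (hf1.trans h13) (not_le.mpr hssa)
            have hTs : Tset n ε ρ s ⊆ Tset n ε ρ' (mtop n ε B ρ' hval') := by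
              apply Tset_subset n ε ρ ρ' a _ _ hother
              · intro j hj hle
                refine hle.trans ?_
                rw [← hf2 s hsa]; exact hKs'm'
              · exact fun hcon => absurd hcon (not_le.mpr hssa)
            have h14 := SB_le_of_subset n ε B hB hTs
            linarith
end
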